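/- arXiv:1201.0658 — 5 statements merged into one kernel-verified Lean document; each statement's English description precedes it below -/
import Mathlib

section
/- Let w be a positive non-decreasing weight function with diverging W and α_c(w) < ∞. For any δ > α_c(w), x / W⁻¹(W(x)+δ) → 0 as x → ∞. -/
open MeasureTheory Filter Topology Set
open scoped ENNReal NNReal

noncomputable section

/-- Extension of a weight sequence to the reals: `w(t) = w(⌊t⌋)` (and `w 0` for `t < 0`). -/
def wext (w : ℕ → ℝ) (t : ℝ) : ℝ := w ⌊t⌋₊

/-- `W(t) = ∫₀ᵗ du / w(u)`. -/
def Wfun (v : ℝ → ℝ) (t : ℝ) : ℝ := ∫ u in (0:ℝ)..t, (v u)⁻¹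

/-- `I_α(w) = ∫₀^∞ dx / w(W⁻¹(W(x)+α))`, valued in `[0,∞]`. -/
def Ia (v : ℝ → ℝ) (Winv : ℝ → ℝ) (α : ℝ) : ℝ≥0∞ :=
  ∫⁻ x in Ioi (0:ℝ), ENNReal.ofReal (v (Winv (Wfun v x + α)))⁻¹

/-- The critical parameter `α_c(w) = inf {α ≥ 0 : I_α(w) < ∞} ∈ [0,∞]` (inf ∅ = ∞). -/
def alphac (v : ℝ → ℝ) (Winv : ℝ → ℝ) : ℝ≥0∞ :=
  sInf (ENNReal.ofReal '' {α : ℝ | 0 < α ∧ Ia v Winv α < ⊤})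

/-- if `α_c(w) < ∞` and `δ > α_c(w)`, then `x / W⁻¹(W(x)+δ) → 0` as
`x → ∞`. -/
theorem stmt13 (w : ℝ → ℝ) (hpos : ∀ x : ℝ, 0 ≤ x → 0 < w x)
    (hmono : MonotoneOn w (Ici (0:ℝ)))
    (hWdiv : Tendsto (Wfun w) atTop atTop)
    (Winv : ℝ → ℝ)
    (hWinv : ∀ t : ℝ, 0 ≤ t → Winv (Wfun w t) = t)
    (hWinv' : ∀ y : ℝ, 0 ≤ y → Wfun w (Winv y) = y)
    (δ : ℝ) (hδ : alphac w Winv < ENNReal.ofReal δ) :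
    Tendsto (fun x : ℝ => x / Winv (Wfun w x + δ)) atTop (nhds 0) := by
  set W := Wfun w with hWdef
  -- basic integrability
  have hanti : ∀ a b : ℝ, 0 ≤ a → AntitoneOn (fun u => (w u)⁻¹) (Icc a b) := by
    intro a b ha u hu v hv huv
    exact inv_anti₀ (hpos u (ha.trans hu.1))
      (hmono (ha.trans hu.1) (ha.trans hv.1) huv)
  have hint : ∀ a b : ℝ, 0 ≤ a → a ≤ b →
      IntervalIntegrable (fun u => (w u)⁻¹) volume a b := by
    intro a b ha hab
    exact AntitoneOn.intervalIntegrable (by rw [uIcc_of_le hab]; exact hanti a b ha)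
  have hgap : ∀ a b : ℝ, 0 ≤ a → a ≤ b → W b - W a = ∫ u in a..b, (w u)⁻¹ := by
    intro a b ha hab
    have h1 := intervalIntegral.integral_add_adjacent_intervals
      (hint 0 a le_rfl ha) (hint a b ha hab)
    simp only [hWdef, Wfun]
    linarith
  have hupper : ∀ a b : ℝ, 0 ≤ a → a ≤ b → W b - W a ≤ (b - a) * (w a)⁻¹ := by
    intro a b ha hab
    rw [hgap a b ha hab]
    have := intervalIntegral.integral_mono_on (μ := volume) hab (hint a b ha hab)
      (intervalIntegrable_const (c := (w a)⁻¹))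
      (fun u hu => inv_anti₀ (hpos a ha) (hmono ha (ha.trans hu.1) hu.1))
    simpa [smul_eq_mul, mul_comm] using this
  have hlower : ∀ a b : ℝ, 0 ≤ a → a ≤ b → (b - a) * (w b)⁻¹ ≤ W b - W a := by
    intro a b ha hab
    rw [hgap a b ha hab]
    have := intervalIntegral.integral_mono_on (μ := volume) hab
      (intervalIntegrable_const (c := (w b)⁻¹)) (hint a b ha hab)
      (fun u hu => inv_anti₀ (hpos u (ha.trans hu.1)) (hmono (ha.trans hu.1)
        (ha.trans hab) hu.2))
    simpa [smul_eq_mul, mul_comm] using this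
  have hW0 : W 0 = 0 := intervalIntegral.integral_same
  have hWnn : ∀ x : ℝ, 0 ≤ x → 0 ≤ W x := by
    intro x hx
    have h1 := hlower 0 x le_rfl hx
    have h2 : 0 < (w x)⁻¹ := inv_pos.mpr (hpos x hx)
    nlinarith
  have hWmono : ∀ a b : ℝ, 0 ≤ a → a ≤ b → W a ≤ W b := by
    intro a b ha hab
    have h1 := hlower a b ha hab
    have h2 : 0 < (w b)⁻¹ := inv_pos.mpr (hpos b (ha.trans hab))
    nlinarith
  -- continuity of W on [0,∞)
  have hWcont : ContinuousOn W (Ici 0) := by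
    have hK : (0:ℝ) ≤ (w 0)⁻¹ := (inv_pos.mpr (hpos 0 le_rfl)).le
    refine LipschitzOnWith.continuousOn (K := Real.toNNReal (w 0)⁻¹) ?_
    rw [lipschitzOnWith_iff_dist_le_mul]
    intro a ha b hb
    have key : ∀ p q : ℝ, 0 ≤ p → p ≤ q → dist (W q) (W p) ≤ (w 0)⁻¹ * dist q p := by
      intro p q hp hpq
      have h1 := hupper p q hp hpq
      have h2 : (w p)⁻¹ ≤ (w 0)⁻¹ := inv_anti₀ (hpos 0 le_rfl) (hmono (mem_Ici.mpr le_rfl) hp hp)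
      have h3 := hWmono p q hp hpq
      rw [Real.dist_eq, Real.dist_eq, abs_of_nonneg (by linarith), abs_of_nonneg (by linarith)]
      nlinarith
    rw [Real.coe_toNNReal _ hK]
    rcases le_total a b with hab | hab
    · rw [dist_comm, dist_comm a b]; exact key a b ha hab
    · exact key b a hb hab
  -- Winv is a genuine monotone inverse on [0,∞)
  have hsurj : ∀ y : ℝ, 0 ≤ y → ∃ t, 0 ≤ t ∧ W t = y := by
    intro y hy
    obtain ⟨t₀, ht₀⟩ := ((hWdiv.eventually_ge_atTop y).and (eventually_ge_atTop 0)).exists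
    have hsub : Icc (0:ℝ) t₀ ⊆ Ici 0 := Icc_subset_Ici_self
    have := intermediate_value_Icc ht₀.2 (hWcont.mono hsub)
    have hmem : y ∈ Icc (W 0) (W t₀) := by rw [hW0]; exact ⟨hy, ht₀.1⟩
    obtain ⟨t, ht, hWt⟩ := this hmem
    exact ⟨t, ht.1, hWt⟩
  have hWinv_nn : ∀ y : ℝ, 0 ≤ y → 0 ≤ Winv y := by
    intro y hy
    obtain ⟨t, ht, rfl⟩ := hsurj y hy
    rw [hWinv t ht]; exact ht
  have hWinvMono : ∀ a b : ℝ, 0 ≤ a → a ≤ b → Winv a ≤ Winv b := by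
    intro a b ha hab
    by_contra h
    push_neg at h
    have h1 : W (Winv b) ≤ W (Winv a) := hWmono _ _ (hWinv_nn b (ha.trans hab)) h.le
    rw [hWinv' a ha, hWinv' b (ha.trans hab)] at h1
    have : a = b := le_antisymm hab h1
    rw [this] at h
    exact lt_irrefl _ h
  -- extract α with I_α < ∞
  rw [alphac, sInf_lt_iff] at hδ
  obtain ⟨e, ⟨α, ⟨hα0, hIα⟩, rfl⟩, he⟩ := hδ
  have hαδ : α < δ := (ENNReal.ofReal_lt_ofReal_iff_of_nonneg hα0.le).mp he
  set β := δ - α with hβdef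
  have hβ : 0 < β := by simp [hβdef]; linarith
  -- measurable monotone version of the integrand
  set φ : ℝ → ℝ := fun t => (w (Winv (W (max t 0) + α)))⁻¹ with hφdef
  have hφanti : Antitone φ := by
    intro s t hst
    have h0s : (0:ℝ) ≤ max s 0 := le_max_right _ _
    have h0t : (0:ℝ) ≤ max t 0 := le_max_right _ _
    have h1 : W (max s 0) ≤ W (max t 0) := hWmono _ _ h0s (max_le_max hst le_rfl)
    have h2 : 0 ≤ W (max s 0) + α := by have := hWnn _ h0s; linarith
    have h3 : Winv (W (max s 0) + α) ≤ Winv (W (max t 0) + α) :=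
      hWinvMono _ _ h2 (by linarith)
    have h4 : 0 ≤ Winv (W (max s 0) + α) := hWinv_nn _ h2
    have h5 : 0 ≤ Winv (W (max t 0) + α) := hWinv_nn _ (by have := hWnn _ h0t; linarith)
    exact inv_anti₀ (hpos _ h4) (hmono h4 h5 h3)
  have hφmeas : Measurable φ := hφanti.measurable
  set F : ℝ → ℝ≥0∞ := fun t => ENNReal.ofReal (φ t) with hFdef
  have hFmeas : Measurable F := ENNReal.measurable_ofReal.comp hφmeas
  -- the finite integral in terms of F
  have hIF : ∫⁻ t in Ioi (0:ℝ), F t < ⊤ := by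
    have heq : ∫⁻ t in Ioi (0:ℝ), F t
        = ∫⁻ t in Ioi (0:ℝ), ENNReal.ofReal (w (Winv (Wfun w t + α)))⁻¹ := by
      refine setLIntegral_congr_fun measurableSet_Ioi ?_
      intro t ht
      simp only [hFdef, hφdef, max_eq_left (le_of_lt (mem_Ioi.mp ht)), hWdef]
    rw [heq]
    exact hIα
  -- tails tend to zero
  set μ' : Measure ℝ := volume.withDensity F with hμ'def
  have hμ'Ioi : ∀ r : ℝ, μ' (Ioi r) = ∫⁻ t in Ioi r, F t := by
    intro r; rw [hμ'def, withDensity_apply F measurableSet_Ioi]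
  have hiInter : (⋂ n : ℕ, Ioi ((n:ℝ))) = ∅ := by
    ext x
    simp only [mem_iInter, mem_Ioi, mem_empty_iff_false, iff_false]
    push_neg
    obtain ⟨n, hn⟩ := exists_nat_gt x
    exact ⟨n, hn.le⟩
  have htail : Tendsto (fun n : ℕ => μ' (Ioi ((n:ℝ)))) atTop (𝓝 0) := by
    have h := tendsto_measure_iInter_atTop (μ := μ') (s := fun n : ℕ => Ioi ((n:ℝ)))
      (fun n => measurableSet_Ioi.nullMeasurableSet)
      (fun m n hmn => Ioi_subset_Ioi (by exact_mod_cast hmn))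
      ⟨0, by rw [hμ'Ioi]; simp only [Nat.cast_zero]; exact hIF.ne⟩
    rw [hiInter] at h
    simpa [Function.comp_def] using h
  -- the main estimate
  rw [Metric.tendsto_nhds]
  intro ε hε
  have hc : (0:ℝ≥0∞) < ENNReal.ofReal (ε * β / 8) := ENNReal.ofReal_pos.mpr (by positivity)
  obtain ⟨n, hn⟩ := (htail.eventually_lt_const hc).exists
  filter_upwards [eventually_ge_atTop (max (2 * (n:ℝ)) 1)] with x hx
  have hx1 : (1:ℝ) ≤ x := le_trans (le_max_right _ _) hx
  have hx2 : 2 * (n:ℝ) ≤ x := le_trans (le_max_left _ _) hx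
  have hx0 : (0:ℝ) < x := by linarith
  have hn0 : (0:ℝ) ≤ (n:ℝ) := Nat.cast_nonneg n
  set y := Winv (W x + δ) with hydef
  set m := Winv (W x + α) with hmdef
  set z := Winv (W x + α + β / 2) with hzdef
  have hWx : 0 ≤ W x := hWnn x hx0.le
  have hxm : x ≤ m := by
    have h := hWinvMono (W x) (W x + α) hWx (by linarith)
    rwa [hWinv x hx0.le] at h
  have hmz : m ≤ z := hWinvMono _ _ (by linarith) (by linarith)
  have hzy : z ≤ y := hWinvMono _ _ (by linarith) (by simp only [hβdef]; linarith)
  have hy0 : (0:ℝ) < y := lt_of_lt_of_le hx0 (hxm.trans (hmz.trans hzy))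
  have hm0 : (0:ℝ) ≤ m := by linarith
  have hWm : W m = W x + α := hWinv' _ (by linarith)
  have hWz : W z = W x + α + β / 2 := hWinv' _ (by linarith)
  have hwm : 0 < w m := hpos m hm0
  -- w m ≤ 2 y / β
  have hwmy : w m * β ≤ 2 * y := by
    have h1 := hupper m z hm0 hmz
    rw [hWm, hWz] at h1
    have h2 : (w m)⁻¹ * w m = 1 := inv_mul_cancel₀ hwm.ne'
    nlinarith
  have hinv : β / (2 * y) ≤ (w m)⁻¹ := by
    rw [div_le_iff₀ (by positivity)]
    have h2 : (w m)⁻¹ * w m = 1 := inv_mul_cancel₀ hwm.ne'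
    nlinarith [inv_pos.mpr hwm]
  -- pointwise lower bound on the chunk
  have hpt : ∀ t ∈ Ioc (x / 2) x, ENNReal.ofReal (β / (2 * y)) ≤ F t := by
    intro t ht
    have ht0 : (0:ℝ) < t := lt_of_le_of_lt (by linarith) ht.1
    have hWt : W t ≤ W x := hWmono t x ht0.le ht.2
    have harg0 : 0 ≤ W t + α := by have := hWnn t ht0.le; linarith
    have harg : Winv (W t + α) ≤ m := hWinvMono _ _ harg0 (by linarith)
    have harg0' : 0 ≤ Winv (W t + α) := hWinv_nn _ harg0
    have hwt : w (Winv (W t + α)) ≤ w m := hmono harg0' hm0 harg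
    have hwt0 : 0 < w (Winv (W t + α)) := hpos _ harg0'
    have h1 : (w m)⁻¹ ≤ (w (Winv (W t + α)))⁻¹ := inv_anti₀ hwt0 hwt
    have h2 : φ t = (w (Winv (W t + α)))⁻¹ := by
      simp only [hφdef, max_eq_left ht0.le]
    exact ENNReal.ofReal_le_ofReal (by rw [h2]; linarith)
  -- chunk estimate
  have hsub : Ioc (x / 2) x ⊆ Ioi ((n:ℝ)) := by
    intro t ht
    exact lt_of_le_of_lt (by linarith) ht.1
  have hchunk : ENNReal.ofReal (β / (2 * y)) * ENNReal.ofReal (x - x / 2)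
      < ENNReal.ofReal (ε * β / 8) := by
    calc ENNReal.ofReal (β / (2 * y)) * ENNReal.ofReal (x - x / 2)
        = ENNReal.ofReal (β / (2 * y)) * volume (Ioc (x / 2) x) := by
          rw [Real.volume_Ioc]
      _ = ∫⁻ _ in Ioc (x / 2) x, ENNReal.ofReal (β / (2 * y)) := by
          rw [setLIntegral_const]
      _ ≤ ∫⁻ t in Ioc (x / 2) x, F t := setLIntegral_mono' measurableSet_Ioc hpt
      _ ≤ ∫⁻ t in Ioi ((n:ℝ)), F t := lintegral_mono_set hsub
      _ = μ' (Ioi ((n:ℝ))) := (hμ'Ioi _).symm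
      _ < ENNReal.ofReal (ε * β / 8) := hn
  rw [← ENNReal.ofReal_mul (by positivity)] at hchunk
  have hreal : β / (2 * y) * (x - x / 2) < ε * β / 8 :=
    (ENNReal.ofReal_lt_ofReal_iff_of_nonneg
      (mul_nonneg (by positivity) (by linarith))).mp hchunk
  -- conclude
  have hxy : x / y < ε := by
    rw [div_lt_iff₀ hy0]
    rw [div_mul_eq_mul_div, div_lt_iff₀ (by positivity)] at hreal
    nlinarith
  rw [Real.dist_eq, sub_zero, abs_of_nonneg (div_nonneg hx0.le hy0.le)]
  exact hxy
end
end

section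
/- Let w be a positive non-decreasing weight function with diverging W and α_c(w) < ∞. For any δ > α_c(w) and any constant c ∈ ℝ, the series ∑ₙ 1 / w(W⁻¹(W(n)+δ) − c) converges (with the convention w(x) = w(0) for x ≤ 0). -/
open MeasureTheory Filter Topology Set
open scoped ENNReal NNReal

noncomputable section

namespace aux
variable {w : ℕ → ℝ}

lemma wext_pos (hpos : ∀ n, 0 < w n) (t : ℝ) : 0 < wext w t := hpos _

lemma wext_mono (hmono : Monotone w) : Monotone (wext w) :=
  fun _ _ h => hmono (Nat.floor_mono h)

lemma inv_anti (hpos : ∀ n, 0 < w n) (hmono : Monotone w) :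
    Antitone (fun t => (wext w t)⁻¹) := fun a _ h =>
  inv_anti₀ (wext_pos hpos a) (wext_mono hmono h)

lemma intInt (hpos : ∀ n, 0 < w n) (hmono : Monotone w) (a b : ℝ) :
    IntervalIntegrable (fun t => (wext w t)⁻¹) volume a b :=
  (inv_anti hpos hmono).intervalIntegrable

lemma Wfun_add (hpos : ∀ n, 0 < w n) (hmono : Monotone w) (t s : ℝ) :
    Wfun (wext w) s = Wfun (wext w) t + ∫ u in t..s, (wext w u)⁻¹ :=
  (intervalIntegral.integral_add_adjacent_intervals
    (intInt hpos hmono 0 t) (intInt hpos hmono t s)).symm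

lemma Wfun_strictMono (hpos : ∀ n, 0 < w n) (hmono : Monotone w) :
    StrictMono (Wfun (wext w)) := by
  intro t s hts
  have h1 := Wfun_add hpos hmono t s
  have h2 : (s - t) * (wext w s)⁻¹ ≤ ∫ u in t..s, (wext w u)⁻¹ := by
    have := intervalIntegral.integral_mono_on (μ := volume) hts.le
      intervalIntegrable_const (intInt hpos hmono t s)
      (fun x hx => inv_anti hpos hmono hx.2)
    simpa using this
  have h3 : 0 < (s - t) * (wext w s)⁻¹ :=
    mul_pos (by linarith) (inv_pos.mpr (wext_pos hpos s))
  linarith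

lemma Wfun_zero : Wfun (wext w) 0 = 0 := intervalIntegral.integral_same

lemma Wfun_diff_le (hpos : ∀ n, 0 < w n) (hmono : Monotone w) {t s : ℝ} (h : t ≤ s) :
    Wfun (wext w) s - Wfun (wext w) t ≤ (s - t) * (wext w t)⁻¹ := by
  have h1 := Wfun_add hpos hmono t s
  have h2 : ∫ u in t..s, (wext w u)⁻¹ ≤ (s - t) * (wext w t)⁻¹ := by
    have := intervalIntegral.integral_mono_on (μ := volume) h
      (intInt hpos hmono t s) intervalIntegrable_const
      (fun x hx => inv_anti hpos hmono hx.1)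
    simpa using this
  linarith

end aux


open aux

set_option maxHeartbeats 1000000 in
/-- if `α_c(w) < ∞`, `δ > α_c(w)` and `c ∈ ℝ`, then
`∑ₙ 1/w(W⁻¹(W(n)+δ) − c) < ∞` (with `w(x) = w(0)` for `x ≤ 0`, as encoded by `wext`). -/
theorem stmt14 (w : ℕ → ℝ) (hpos : ∀ n, 0 < w n) (hmono : Monotone w)
    (hdiv : ¬ Summable (fun n : ℕ => (w n)⁻¹))
    (Winv : ℝ → ℝ)
    (hWinv : ∀ t : ℝ, 0 ≤ t → Winv (Wfun (wext w) t) = t)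
    (hWinv' : ∀ y : ℝ, 0 ≤ y → Wfun (wext w) (Winv y) = y)
    (δ : ℝ) (hδ : alphac (wext w) Winv < ENNReal.ofReal δ)
    (c : ℝ) :
    Summable (fun n : ℕ => (wext w (Winv (Wfun (wext w) n + δ) - c))⁻¹) := by
  classical
  set v := wext w with hv
  have hvpos : ∀ t, 0 < v t := wext_pos hpos
  have hvmono : Monotone v := wext_mono hmono
  have Wsm : StrictMono (Wfun v) := Wfun_strictMono hpos hmono
  have Wmono : Monotone (Wfun v) := Wsm.monotone
  have hW0 : Wfun v 0 = 0 := Wfun_zero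
  -- extract α
  obtain ⟨b, hbS, hbδ⟩ := sInf_lt_iff.mp hδ
  obtain ⟨α, ⟨hα0, hIa⟩, rfl⟩ := hbS
  have hδ0 : 0 < δ := by
    have : (0:ℝ≥0∞) < ENNReal.ofReal δ := lt_of_le_of_lt zero_le hbδ
    exact ENNReal.ofReal_pos.mp this
  have hαδ : α < δ := (ENNReal.ofReal_lt_ofReal_iff hδ0).mp hbδ
  -- basic facts
  have hWnn : ∀ x : ℝ, 0 ≤ x → 0 ≤ Wfun v x := fun x hx => hW0 ▸ Wmono hx
  -- g and its properties
  set g : ℝ → ℝ := fun x => (v (Winv (Wfun v x + α)))⁻¹ with hg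
  have hgnn : ∀ x, 0 ≤ g x := fun x => (inv_pos.mpr (hvpos _)).le
  have hganti : ∀ x y : ℝ, 0 ≤ x → x ≤ y → g y ≤ g x := by
    intro x y hx hxy
    have h1 : 0 ≤ Wfun v x + α := by
      have := hWnn x hx; linarith
    have h2 : Wfun v x + α ≤ Wfun v y + α := by
      have := Wmono hxy; linarith
    have h3 : Winv (Wfun v x + α) ≤ Winv (Wfun v y + α) := by
      rw [← Wsm.le_iff_le, hWinv' _ h1, hWinv' _ (le_trans h1 h2)]
      exact h2
    exact inv_anti₀ (hvpos _) (hvmono h3)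
  -- summability of g on naturals
  have key : ∀ n : ℕ, ENNReal.ofReal (g (n+1)) ≤
      ∫⁻ x in Ioc (n:ℝ) (n+1), ENNReal.ofReal (g x) := by
    intro n
    have h1 : ∫⁻ x in Ioc (n:ℝ) (n+1), ENNReal.ofReal (g (n+1))
        ≤ ∫⁻ x in Ioc (n:ℝ) (n+1), ENNReal.ofReal (g x) := by
      refine lintegral_mono_ae ?_
      filter_upwards [ae_restrict_mem measurableSet_Ioc] with x hx
      exact ENNReal.ofReal_le_ofReal
        (hganti x (n+1) (le_trans (n.cast_nonneg) hx.1.le) hx.2)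
    rw [setLIntegral_const] at h1
    simpa [Real.volume_Ioc] using h1
  have hdisj : Pairwise (Function.onFun Disjoint fun n : ℕ => Ioc (n:ℝ) (n+1)) := by
    intro m n hmn
    rcases lt_or_gt_of_ne hmn with h | h
    · refine Set.disjoint_left.mpr fun x hx hx' => ?_
      have h1 : (m:ℝ) + 1 ≤ n := by exact_mod_cast h
      have := hx.2; have := hx'.1; linarith
    · refine Set.disjoint_left.mpr fun x hx hx' => ?_
      have h1 : (n:ℝ) + 1 ≤ m := by exact_mod_cast h
      have := hx.1; have := hx'.2; linarith
  have hsum : ∑' n : ℕ, ENNReal.ofReal (g ((n:ℝ)+1)) ≤ Ia v Winv α := by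
    calc ∑' n : ℕ, ENNReal.ofReal (g ((n:ℝ)+1))
        ≤ ∑' n : ℕ, ∫⁻ x in Ioc (n:ℝ) (n+1), ENNReal.ofReal (g x) :=
          ENNReal.tsum_le_tsum key
      _ = ∫⁻ x in ⋃ n : ℕ, Ioc (n:ℝ) (n+1), ENNReal.ofReal (g x) :=
          (lintegral_iUnion (fun _ => measurableSet_Ioc) hdisj _).symm
      _ ≤ Ia v Winv α := by
          refine lintegral_mono_set ?_
          intro x hx
          simp only [mem_iUnion, mem_Ioc] at hx
          obtain ⟨n, h1, _⟩ := hx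
          exact lt_of_le_of_lt (n.cast_nonneg) h1
  have hgsum1 : Summable (fun n : ℕ => g ((n:ℝ)+1)) := by
    have hne : ∑' n : ℕ, ENNReal.ofReal (g ((n:ℝ)+1)) ≠ ⊤ :=
      ne_of_lt (lt_of_le_of_lt hsum hIa)
    have := ENNReal.summable_toReal hne
    refine this.congr fun n => ?_
    exact ENNReal.toReal_ofReal (hgnn _)
  have hgsum : Summable (fun n : ℕ => g n) := by
    rw [← summable_nat_add_iff 1]
    refine hgsum1.congr fun n => ?_
    push_cast
    ring_nf
  -- find K with max c 0 ≤ w K * (δ - α)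
  set c' : ℝ := max c 0 with hc'
  have hc'0 : 0 ≤ c' := le_max_right _ _
  have hcc' : c ≤ c' := le_max_left _ _
  obtain ⟨K, hK⟩ : ∃ K : ℕ, c' ≤ w K * (δ - α) := by
    by_cases hb : BddAbove (Set.range w)
    · exfalso
      obtain ⟨M, hM⟩ := hb
      have hM0 : 0 < M := lt_of_lt_of_le (hpos 0) (hM ⟨0, rfl⟩)
      have hle : ∀ x : ℝ, ENNReal.ofReal M⁻¹
          ≤ ENNReal.ofReal (v (Winv (Wfun v x + α)))⁻¹ := by
        intro x
        refine ENNReal.ofReal_le_ofReal (inv_anti₀ (hvpos _) (hM ⟨_, rfl⟩))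
      have hIa' : (⊤:ℝ≥0∞) ≤ Ia v Winv α := by
        calc (⊤:ℝ≥0∞) = ENNReal.ofReal M⁻¹ * volume (Ioi (0:ℝ)) := by
              rw [Real.volume_Ioi, ENNReal.mul_top]
              exact (ENNReal.ofReal_pos.mpr (inv_pos.mpr hM0)).ne'
          _ = ∫⁻ _ in Ioi (0:ℝ), ENNReal.ofReal M⁻¹ := (setLIntegral_const _ _).symm
          _ ≤ Ia v Winv α := lintegral_mono fun x => hle x
      exact (not_le_of_gt hIa) (le_top.trans hIa')
    · obtain ⟨y, ⟨K, rfl⟩, hy⟩ := (not_bddAbove_iff.mp hb) (c' / (δ - α))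
      exact ⟨K, le_of_lt ((div_lt_iff₀ (by linarith)).mp hy)⟩
  -- the comparison
  set N : ℕ := K + ⌈c'⌉₊ with hN
  have hcomp : ∀ n : ℕ, N ≤ n →
      (v (Winv (Wfun v n + δ) - c))⁻¹ ≤ g n := by
    intro n hn
    set x : ℝ := Winv (Wfun v n + δ) with hx
    have hWn : 0 ≤ Wfun v n := hWnn _ (n.cast_nonneg)
    have hy0 : 0 ≤ Wfun v n + δ := by linarith
    have hWx : Wfun v x = Wfun v n + δ := hWinv' _ hy0
    have hxn : (n:ℝ) ≤ x := by
      rw [← Wsm.le_iff_le, hWx]; linarith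
    have hNn : (N:ℝ) ≤ n := by exact_mod_cast hn
    have hKx : (K:ℝ) ≤ x - c' := by
      have h1 : (K:ℝ) + c' ≤ N := by
        have := Nat.le_ceil c'
        push_cast [hN]
        linarith
      linarith
    have hvK : w K ≤ v (x - c') := by
      have : (K:ℕ) ≤ ⌊x - c'⌋₊ := Nat.le_floor hKx
      exact hmono this
    have hdiff : Wfun v x - Wfun v (x - c') ≤ δ - α := by
      have h1 := Wfun_diff_le hpos hmono (t := x - c') (s := x) (by linarith)
      have h2 : (x - (x - c')) * (v (x - c'))⁻¹ ≤ c' * (w K)⁻¹ := by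
        have : (v (x - c'))⁻¹ ≤ (w K)⁻¹ := inv_anti₀ (hpos K) hvK
        have hxx : x - (x - c') = c' := by ring
        rw [hxx]
        exact mul_le_mul_of_nonneg_left this hc'0
      have h3 : c' * (w K)⁻¹ ≤ δ - α := by
        rw [← div_eq_mul_inv]
        exact (div_le_iff₀ (hpos K)).mpr (by linarith [hK, mul_comm (w K) (δ - α)])
      calc Wfun v x - Wfun v (x - c') ≤ (x - (x - c')) * (v (x - c'))⁻¹ := h1
        _ ≤ c' * (w K)⁻¹ := h2
        _ ≤ δ - α := h3
    have hWc' : Wfun v n + α ≤ Wfun v (x - c') := by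
      rw [hWx] at hdiff; linarith
    have hα0' : 0 ≤ Wfun v n + α := by linarith
    have hle1 : Winv (Wfun v n + α) ≤ x - c' := by
      rw [← Wsm.le_iff_le, hWinv' _ hα0']
      exact hWc'
    have hle2 : Winv (Wfun v n + α) ≤ x - c := le_trans hle1 (by linarith)
    exact inv_anti₀ (hvpos _) (hvmono hle2)
  -- conclude
  rw [← summable_nat_add_iff N]
  refine Summable.of_nonneg_of_le (fun n => (inv_pos.mpr (hvpos _)).le)
    (fun n => hcomp (n + N) (Nat.le_add_left N n)) ?_
  exact (summable_nat_add_iff N).mpr hgsum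
end
end

section
/- Let w be a positive non-decreasing weight function with diverging W and α_c(w) = 0. Then for any δ > 0 and γ > 0, the series ∑ₙ 1 / w(γ · W⁻¹(W(n)+δ)) converges. -/
open MeasureTheory Filter Topology Set
open scoped ENNReal NNReal

noncomputable section

section AuxLemmas

variable {w : ℕ → ℝ}

lemma wext_mono (hmono : Monotone w) : Monotone (wext w) :=
  fun _ _ hst => hmono (Nat.floor_mono hst)

lemma inv_wext_anti (hpos : ∀ n, 0 < w n) (hmono : Monotone w) :
    Antitone fun u => (wext w u)⁻¹ := fun s t hst =>
  inv_anti₀ (hpos _) (wext_mono hmono hst)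

lemma wext_ii (hpos : ∀ n, 0 < w n) (hmono : Monotone w) (a b : ℝ) :
    IntervalIntegrable (fun u => (wext w u)⁻¹) volume a b :=
  (inv_wext_anti hpos hmono).intervalIntegrable

lemma Wfun_add (hpos : ∀ n, 0 < w n) (hmono : Monotone w) (a b : ℝ) :
    Wfun (wext w) b = Wfun (wext w) a + ∫ u in a..b, (wext w u)⁻¹ :=
  (intervalIntegral.integral_add_adjacent_intervals
    (wext_ii hpos hmono 0 a) (wext_ii hpos hmono a b)).symm

lemma Wfun_mono (hpos : ∀ n, 0 < w n) (hmono : Monotone w) :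
    Monotone (Wfun (wext w)) := by
  intro s t hst
  have h1 := Wfun_add hpos hmono s t
  have h2 : 0 ≤ ∫ u in s..t, (wext w u)⁻¹ :=
    intervalIntegral.integral_nonneg hst fun u _ => inv_nonneg.mpr (hpos _).le
  linarith

lemma Wfun_zero (v : ℝ → ℝ) : Wfun v 0 = 0 := intervalIntegral.integral_same

lemma Wfun_nonneg (hpos : ∀ n, 0 < w n) (hmono : Monotone w) {t : ℝ} (ht : 0 ≤ t) :
    0 ≤ Wfun (wext w) t := by
  have := Wfun_mono hpos hmono ht
  rwa [Wfun_zero] at this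

lemma Wfun_neg (hpos : ∀ n, 0 < w n) (hmono : Monotone w) {t : ℝ} (ht : t < 0) :
    Wfun (wext w) t < 0 := by
  have h1 : Wfun (wext w) 0 = Wfun (wext w) t + ∫ u in t..(0:ℝ), (wext w u)⁻¹ :=
    Wfun_add hpos hmono t 0
  rw [Wfun_zero] at h1
  have hconst : ∀ u ∈ Icc t (0:ℝ), (w 0)⁻¹ ≤ (wext w u)⁻¹ := by
    intro u hu
    have hfl : ⌊u⌋₊ = 0 := Nat.floor_eq_zero.mpr (lt_of_le_of_lt hu.2 one_pos)
    simp [wext, hfl]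
  have h2 : (0 - t) * (w 0)⁻¹ ≤ ∫ u in t..(0:ℝ), (wext w u)⁻¹ := by
    have := intervalIntegral.integral_mono_on ht.le intervalIntegrable_const
      (wext_ii hpos hmono t 0) hconst
    simpa [intervalIntegral.integral_const, smul_eq_mul] using this
  have h3 : 0 < (0 - t) * (w 0)⁻¹ := by
    have := hpos 0
    have h4 : 0 < 0 - t := by linarith
    positivity
  linarith

/-- For a nonnegative antitone summable sequence, `(n+1) * a n` is eventually small. -/
lemma tail_mul_small (a : ℕ → ℝ) (hanti : Antitone a) (h0 : ∀ n, 0 ≤ a n)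
    (hs : Summable a) {ε : ℝ} (hε : 0 < ε) :
    ∃ M : ℕ, ∀ m, M ≤ m → ((m : ℝ) + 1) * a m ≤ ε := by
  have hT : Tendsto (fun i => ∑' k, a (k + i)) atTop (𝓝 0) := tendsto_sum_nat_add a
  have hev : ∀ᶠ i in atTop, ∑' k, a (k + i) < ε / 4 :=
    hT.eventually_lt_const (by linarith)
  obtain ⟨i₀, hi₀⟩ := eventually_atTop.mp hev
  refine ⟨2 * i₀ + 1, fun m hm => ?_⟩
  set i := (m + 1) / 2 with hidef
  have h2i : 2 * i ≤ m + 1 := by omega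
  have h2i' : m ≤ 2 * i := by omega
  have hii : i₀ ≤ i := by omega
  have hsum' : Summable fun k => a (k + i) := (summable_nat_add_iff i).mpr hs
  have hS : ∑' k, a (k + i) < ε / 4 := hi₀ i hii
  have key : (i : ℝ) * a m ≤ ∑' k, a (k + i) := by
    have h1 : (i : ℝ) * a m = ∑ _k ∈ Finset.range i, a m := by
      rw [Finset.sum_const, Finset.card_range, nsmul_eq_mul]
    rw [h1]
    refine le_trans (Finset.sum_le_sum fun k hk => ?_)
      (Summable.sum_le_tsum _ (fun k _ => h0 _) hsum')
    refine hanti ?_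
    have := Finset.mem_range.mp hk
    omega
  have key2 : a m ≤ ∑' k, a (k + i) := by
    have h1 : a m ≤ a (0 + i) := hanti (by omega)
    exact h1.trans (Summable.le_tsum hsum' 0 fun k _ => h0 _)
  have hm' : ((m : ℝ) + 1) ≤ 2 * (i : ℝ) + 1 := by
    have : (m : ℝ) ≤ 2 * (i : ℝ) := by exact_mod_cast h2i'
    linarith
  calc ((m : ℝ) + 1) * a m ≤ (2 * (i : ℝ) + 1) * a m :=
        mul_le_mul_of_nonneg_right hm' (h0 m)
    _ = 2 * ((i : ℝ) * a m) + a m := by ring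
    _ ≤ 2 * (ε / 4) + ε / 4 := by linarith
    _ ≤ ε := by linarith

end AuxLemmas

/-- if `α_c(w) = 0`, then for any `δ, γ > 0`,
`∑ₙ 1/w(γ W⁻¹(W(n)+δ)) < ∞`. -/
theorem stmt15 (w : ℕ → ℝ) (hpos : ∀ n, 0 < w n) (hmono : Monotone w)
    (hdiv : ¬ Summable (fun n : ℕ => (w n)⁻¹))
    (Winv : ℝ → ℝ)
    (hWinv : ∀ t : ℝ, 0 ≤ t → Winv (Wfun (wext w) t) = t)
    (hWinv' : ∀ y : ℝ, 0 ≤ y → Wfun (wext w) (Winv y) = y)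
    (hzero : alphac (wext w) Winv = 0)
    (δ γ : ℝ) (hδ : 0 < δ) (hγ : 0 < γ) :
    Summable (fun n : ℕ => (wext w (γ * Winv (Wfun (wext w) n + δ)))⁻¹) := by
  have hvpos : ∀ t : ℝ, 0 < wext w t := fun t => hpos _
  have hvmono : Monotone (wext w) := wext_mono hmono
  have hWmono : Monotone (Wfun (wext w)) := Wfun_mono hpos hmono
  have hWnn : ∀ t : ℝ, 0 ≤ t → 0 ≤ Wfun (wext w) t := fun t ht => Wfun_nonneg hpos hmono ht
  have hWinv_nn : ∀ y : ℝ, 0 ≤ y → 0 ≤ Winv y := by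
    intro y hy
    by_contra hlt
    push_neg at hlt
    have h1 := Wfun_neg hpos hmono hlt
    rw [hWinv' y hy] at h1
    linarith
  have hWinv_mono : ∀ y₁ y₂ : ℝ, 0 ≤ y₁ → y₁ ≤ y₂ → Winv y₁ ≤ Winv y₂ := by
    intro y₁ y₂ h1 h12
    by_contra hlt
    push_neg at hlt
    have h2 : Wfun (wext w) (Winv y₂) ≤ Wfun (wext w) (Winv y₁) := hWmono hlt.le
    rw [hWinv' y₁ h1, hWinv' y₂ (h1.trans h12)] at h2
    have h3 : y₁ = y₂ := le_antisymm h12 h2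
    rw [h3] at hlt
    exact lt_irrefl _ hlt
  -- extract a small α₀ with finite integral
  obtain ⟨α₀, hα₀pos, hα₀lt, hIa⟩ :
      ∃ α₀ : ℝ, 0 < α₀ ∧ α₀ < δ / 3 ∧ Ia (wext w) Winv α₀ < ⊤ := by
    have hlt : sInf (ENNReal.ofReal '' {α : ℝ | 0 < α ∧ Ia (wext w) Winv α < ⊤})
        < ENNReal.ofReal (δ / 3) := by
      have h1 : alphac (wext w) Winv < ENNReal.ofReal (δ / 3) := by
        rw [hzero]
        exact ENNReal.ofReal_pos.mpr (by linarith)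
      simpa [alphac] using h1
    obtain ⟨e, he, helt⟩ := sInf_lt_iff.mp hlt
    obtain ⟨α₀, hα₀, rfl⟩ := he
    exact ⟨α₀, hα₀.1, (ENNReal.ofReal_lt_ofReal_iff (by linarith)).mp helt, hα₀.2⟩
  set h : ℝ → ℝ := fun z => (wext w (Winv (Wfun (wext w) z + α₀)))⁻¹ with hh
  have h_nonneg : ∀ z, 0 ≤ h z := fun z => inv_nonneg.mpr (hvpos _).le
  have hAnti : ∀ s t : ℝ, 0 ≤ s → s ≤ t → h t ≤ h s := by
    intro s t hs hst
    have h1 : Wfun (wext w) s + α₀ ≤ Wfun (wext w) t + α₀ := by linarith [hWmono hst]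
    have h2 : 0 ≤ Wfun (wext w) s + α₀ := by linarith [hWnn s hs]
    have h3 : Winv (Wfun (wext w) s + α₀) ≤ Winv (Wfun (wext w) t + α₀) :=
      hWinv_mono _ _ h2 h1
    exact inv_anti₀ (hvpos _) (hvmono h3)
  set a : ℕ → ℝ := fun n => h n with ha
  -- summability of `a` from finiteness of the integral
  have hkey : ∀ n : ℕ,
      ENNReal.ofReal (a (n + 1)) ≤ ∫⁻ x in Ioc (n : ℝ) ((n : ℝ) + 1), ENNReal.ofReal (h x) := by
    intro n
    have hcast : a (n + 1) = h ((n : ℝ) + 1) := by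
      have : (((n + 1 : ℕ)) : ℝ) = (n : ℝ) + 1 := by push_cast; ring
      simp only [ha, this]
    have hle : ∀ x ∈ Ioc (n : ℝ) ((n : ℝ) + 1),
        ENNReal.ofReal (a (n + 1)) ≤ ENNReal.ofReal (h x) := by
      intro x hx
      apply ENNReal.ofReal_le_ofReal
      rw [hcast]
      exact hAnti x ((n : ℝ) + 1) (le_of_lt (lt_of_le_of_lt (Nat.cast_nonneg n) hx.1)) hx.2
    calc ENNReal.ofReal (a (n + 1))
        = ENNReal.ofReal (a (n + 1)) * volume (Ioc (n : ℝ) ((n : ℝ) + 1)) := by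
          rw [Real.volume_Ioc]
          norm_num
      _ = ∫⁻ _x in Ioc (n : ℝ) ((n : ℝ) + 1), ENNReal.ofReal (a (n + 1)) :=
          (setLIntegral_const _ _).symm
      _ ≤ ∫⁻ x in Ioc (n : ℝ) ((n : ℝ) + 1), ENNReal.ofReal (h x) :=
          setLIntegral_mono' measurableSet_Ioc hle
  have hdisj : Pairwise (Function.onFun Disjoint fun n : ℕ => Ioc (n : ℝ) ((n : ℝ) + 1)) := by
    intro m n hmn
    simp only [Function.onFun]
    rw [Set.Ioc_disjoint_Ioc]
    rcases lt_or_gt_of_ne hmn with hlt | hlt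
    · have h1 : (m : ℝ) + 1 ≤ (n : ℝ) := by exact_mod_cast hlt
      exact le_trans (min_le_left _ _) (h1.trans (le_max_right _ _))
    · have h1 : (n : ℝ) + 1 ≤ (m : ℝ) := by exact_mod_cast hlt
      exact le_trans (min_le_right _ _) (h1.trans (le_max_left _ _))
  have hsub : (⋃ n : ℕ, Ioc (n : ℝ) ((n : ℝ) + 1)) ⊆ Ioi (0 : ℝ) := by
    intro x hx
    obtain ⟨n, hn⟩ := mem_iUnion.mp hx
    exact lt_of_le_of_lt (Nat.cast_nonneg n) hn.1
  have htsum_le : ∑' n : ℕ, ENNReal.ofReal (a (n + 1)) ≤ Ia (wext w) Winv α₀ := by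
    calc ∑' n : ℕ, ENNReal.ofReal (a (n + 1))
        ≤ ∑' n : ℕ, ∫⁻ x in Ioc (n : ℝ) ((n : ℝ) + 1), ENNReal.ofReal (h x) :=
          ENNReal.tsum_le_tsum hkey
      _ = ∫⁻ x in ⋃ n : ℕ, Ioc (n : ℝ) ((n : ℝ) + 1), ENNReal.ofReal (h x) :=
          (lintegral_iUnion (fun _ => measurableSet_Ioc) hdisj _).symm
      _ ≤ ∫⁻ x in Ioi (0 : ℝ), ENNReal.ofReal (h x) := lintegral_mono_set hsub
      _ = Ia (wext w) Winv α₀ := rfl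
  have hsum1 : Summable fun n : ℕ => a (n + 1) := by
    have hne : ∑' n : ℕ, ENNReal.ofReal (a (n + 1)) ≠ ⊤ := (lt_of_le_of_lt htsum_le hIa).ne
    exact (ENNReal.summable_toReal hne).congr fun n => ENNReal.toReal_ofReal (h_nonneg _)
  have hsa : Summable a := (summable_nat_add_iff 1).mp hsum1
  have haAnti : Antitone a := by
    intro m n hmn
    exact hAnti (m : ℝ) (n : ℝ) (Nat.cast_nonneg m) (by exact_mod_cast hmn)
  obtain ⟨M, hM⟩ := tail_mul_small a haAnti (fun n => h_nonneg _) hsa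
    (show (0:ℝ) < γ * δ / 3 by positivity)
  obtain ⟨N, hN⟩ := exists_nat_ge ((M : ℝ) / γ)
  -- the key pointwise comparison for large n
  have hcomp : ∀ n : ℕ, N ≤ n →
      (wext w (γ * Winv (Wfun (wext w) n + δ)))⁻¹ ≤ a n := by
    intro n hn
    set y := Winv (Wfun (wext w) n + δ) with hy
    set z := γ * y with hz
    have hWn : 0 ≤ Wfun (wext w) n := hWnn _ (Nat.cast_nonneg n)
    have hWnδ : 0 ≤ Wfun (wext w) n + δ := by linarith
    have hy0 : 0 ≤ y := hWinv_nn _ hWnδ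
    have hz0 : 0 ≤ z := mul_nonneg hγ.le hy0
    have hyn : (n : ℝ) ≤ y := by
      have h1 : Winv (Wfun (wext w) n) ≤ y := hWinv_mono _ _ hWn (by linarith)
      rwa [hWinv _ (Nat.cast_nonneg n)] at h1
    have hWy : Wfun (wext w) y = Wfun (wext w) n + δ := hWinv' _ hWnδ
    have hWz : Wfun (wext w) n + α₀ ≤ Wfun (wext w) z := by
      rcases le_or_gt 1 γ with hγ1 | hγ1
      · have h1 : y ≤ z := le_mul_of_one_le_left hy0 hγ1
        have h2 := hWmono h1
        linarith
      · -- γ < 1 : use the tail estimate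
        set z' := Winv (Wfun (wext w) z + α₀) with hz'
        have hWz0 : 0 ≤ Wfun (wext w) z := hWnn _ hz0
        have hz'0 : 0 ≤ z' := hWinv_nn _ (by linarith)
        have hWz' : Wfun (wext w) z' = Wfun (wext w) z + α₀ := hWinv' _ (by linarith)
        have hsplit : Wfun (wext w) y = Wfun (wext w) z' + ∫ u in z'..y, (wext w u)⁻¹ :=
          Wfun_add hpos hmono z' y
        have hvz' : (wext w z')⁻¹ = h z := rfl
        have hint : (∫ u in z'..y, (wext w u)⁻¹) ≤ y * h z := by
          rcases le_or_gt z' y with hcase | hcase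
          · have h1 : (∫ u in z'..y, (wext w u)⁻¹) ≤ (y - z') * (wext w z')⁻¹ := by
              have h2 := intervalIntegral.integral_mono_on hcase
                (wext_ii hpos hmono z' y) intervalIntegrable_const
                (fun u hu => inv_anti₀ (hvpos z') (hvmono hu.1))
              simpa [intervalIntegral.integral_const, smul_eq_mul] using h2
            have h3 : (y - z') * (wext w z')⁻¹ ≤ y * (wext w z')⁻¹ :=
              mul_le_mul_of_nonneg_right (by linarith) (inv_nonneg.mpr (hvpos _).le)
            rw [hvz'] at h1 h3
            linarith
          · have h1 : (∫ u in z'..y, (wext w u)⁻¹) = - ∫ u in y..z', (wext w u)⁻¹ :=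
              intervalIntegral.integral_symm _ _
            have h2 : 0 ≤ ∫ u in y..z', (wext w u)⁻¹ :=
              intervalIntegral.integral_nonneg hcase.le fun u _ => inv_nonneg.mpr (hvpos _).le
            have h3 : 0 ≤ y * h z := mul_nonneg hy0 (h_nonneg z)
            linarith
        have hyh : y * h z ≤ δ / 3 := by
          have hfl : (⌊z⌋₊ : ℝ) ≤ z := Nat.floor_le hz0
          have hhz : h z ≤ a ⌊z⌋₊ := hAnti _ _ (Nat.cast_nonneg _) hfl
          have hzfl : z ≤ (⌊z⌋₊ : ℝ) + 1 := (Nat.lt_floor_add_one z).le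
          have hMfl : M ≤ ⌊z⌋₊ := by
            apply Nat.le_floor
            have h5 : (M : ℝ) ≤ γ * N := by
              rw [div_le_iff₀ hγ] at hN
              linarith
            have h6 : (N : ℝ) ≤ (n : ℝ) := by exact_mod_cast hn
            have h7 : γ * (N : ℝ) ≤ γ * y := by nlinarith
            linarith [h7, h5]
          have hMa := hM ⌊z⌋₊ hMfl
          have hya : 0 ≤ a ⌊z⌋₊ := h_nonneg _
          have h7 : y * h z ≤ y * a ⌊z⌋₊ := mul_le_mul_of_nonneg_left hhz hy0
          have h8 : y = z / γ := by
            rw [hz]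
            field_simp
          have h9 : y * a ⌊z⌋₊ ≤ (((⌊z⌋₊ : ℝ) + 1) / γ) * a ⌊z⌋₊ := by
            apply mul_le_mul_of_nonneg_right _ hya
            rw [h8]
            exact div_le_div_of_nonneg_right hzfl hγ.le
          have h10 : (((⌊z⌋₊ : ℝ) + 1) / γ) * a ⌊z⌋₊ ≤ δ / 3 := by
            rw [div_mul_eq_mul_div, div_le_iff₀ hγ]
            calc ((⌊z⌋₊ : ℝ) + 1) * a ⌊z⌋₊ ≤ γ * δ / 3 := hMa
              _ = δ / 3 * γ := by ring
          linarith
        linarith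
    have h1 : Winv (Wfun (wext w) n + α₀) ≤ Winv (Wfun (wext w) z) :=
      hWinv_mono _ _ (by linarith) hWz
    rw [hWinv z hz0] at h1
    have h2 : wext w (Winv (Wfun (wext w) n + α₀)) ≤ wext w z := hvmono h1
    exact inv_anti₀ (hvpos _) h2
  -- conclude by comparison
  have hsaN : Summable fun n : ℕ => a (n + N) := (summable_nat_add_iff N).mpr hsa
  have hfin : Summable fun n : ℕ =>
      (wext w (γ * Winv (Wfun (wext w) ((n + N : ℕ) : ℝ) + δ)))⁻¹ := by
    apply Summable.of_nonneg_of_le (fun n => inv_nonneg.mpr (hvpos _).le)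
      (fun n => hcomp (n + N) (Nat.le_add_left N n)) hsaN
  exact (summable_nat_add_iff N).mp hfin
end
end

section
/- Let w be a positive non-decreasing weight function with diverging W. For any β < α_c(w), the series ∑ₙ 1 / w(n + W⁻¹(W(n)+β)) diverges. -/
open MeasureTheory Filter Topology Set
open scoped ENNReal NNReal

noncomputable section

/-- for any `0 < β < α_c(w)`, the series
`∑ₙ 1/w(n + W⁻¹(W(n)+β))` diverges. -/
theorem stmt16 (w : ℕ → ℝ) (hpos : ∀ n, 0 < w n) (hmono : Monotone w)
    (hdiv : ¬ Summable (fun n : ℕ => (w n)⁻¹))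
    (Winv : ℝ → ℝ)
    (hWinv : ∀ t : ℝ, 0 ≤ t → Winv (Wfun (wext w) t) = t)
    (hWinv' : ∀ y : ℝ, 0 ≤ y → Wfun (wext w) (Winv y) = y)
    (β : ℝ) (hβpos : 0 < β) (hβ : ENNReal.ofReal β < alphac (wext w) Winv) :
    ¬ Summable (fun n : ℕ =>
        (wext w ((n : ℝ) + Winv (Wfun (wext w) n + β)))⁻¹) := by
  intro hsum
  set v : ℝ → ℝ := wext w with hv
  have hvpos : ∀ t, 0 < v t := fun t => hpos _
  have hvmono : Monotone v := fun a b hab => hmono (Nat.floor_mono hab)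
  have hmeas : Measurable fun u : ℝ => (v u)⁻¹ :=
    (measurable_from_nat.comp Nat.measurable_floor).inv
  -- interval integrability of 1/v
  have hint : ∀ a b : ℝ, IntervalIntegrable (fun u => (v u)⁻¹) volume a b := by
    intro a b
    rw [intervalIntegrable_iff]
    refine Integrable.mono' (g := fun _ => (w 0)⁻¹)
      (integrableOn_const measure_Ioc_lt_top.ne) hmeas.aestronglyMeasurable.restrict ?_
    filter_upwards with u
    rw [Real.norm_eq_abs, abs_of_nonneg (inv_nonneg.2 (hvpos u).le)]
    exact inv_anti₀ (hpos 0) (hmono (Nat.zero_le _))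
  have hWadd : ∀ a b : ℝ, Wfun v b = Wfun v a + ∫ u in a..b, (v u)⁻¹ := by
    intro a b
    rw [Wfun, Wfun, intervalIntegral.integral_add_adjacent_intervals (hint 0 a) (hint a b)]
  -- strict monotonicity of W
  have hWsm : StrictMono (Wfun v) := by
    intro a b hab
    rw [hWadd a b]
    have hlow : ∀ u ∈ Icc a b, (v b)⁻¹ ≤ (v u)⁻¹ := fun u hu =>
      inv_anti₀ (hvpos u) (hvmono hu.2)
    have h1 : (∫ _ in a..b, (v b)⁻¹) ≤ ∫ u in a..b, (v u)⁻¹ :=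
      intervalIntegral.integral_mono_on hab.le intervalIntegrable_const (hint a b) hlow
    rw [intervalIntegral.integral_const, smul_eq_mul] at h1
    have : 0 < (b - a) * (v b)⁻¹ :=
      mul_pos (by linarith) (inv_pos.2 (hvpos b))
    linarith
  have hW0 : Wfun v 0 = 0 := intervalIntegral.integral_same
  have hWnn : ∀ t : ℝ, 0 ≤ t → 0 ≤ Wfun v t := fun t ht => by
    have := hWsm.monotone ht; rwa [hW0] at this
  set g : ℝ → ℝ := fun x => Winv (Wfun v x + β) with hg
  have hWg : ∀ x : ℝ, 0 ≤ x → Wfun v (g x) = Wfun v x + β := fun x hx =>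
    hWinv' _ (add_nonneg (hWnn x hx) hβpos.le)
  have hgx : ∀ x : ℝ, 0 ≤ x → x ≤ g x := by
    intro x hx
    by_contra h
    push_neg at h
    have h2 := hWsm h
    rw [hWg x hx] at h2
    linarith
  -- translation inequality
  have htrans : ∀ a b c : ℝ, a ≤ b → 0 ≤ c →
      (∫ u in (a+c)..(b+c), (v u)⁻¹) ≤ ∫ u in a..b, (v u)⁻¹ := by
    intro a b c hab hc
    rw [← intervalIntegral.integral_comp_add_right (fun u => (v u)⁻¹) c]
    have hi := (hint (a+c) (b+c)).comp_add_right c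
    simp only [add_sub_cancel_right] at hi
    refine intervalIntegral.integral_mono_on hab hi (hint a b) (fun u _ => ?_)
    exact inv_anti₀ (hvpos u) (hvmono (by linarith))
  -- Winv monotone on nonneg reals
  have hWinvmono : ∀ y₁ y₂ : ℝ, 0 ≤ y₁ → y₁ ≤ y₂ → Winv y₁ ≤ Winv y₂ := by
    intro y₁ y₂ h1 h12
    have := hWinv' y₁ h1
    have h2 := hWinv' y₂ (h1.trans h12)
    exact hWsm.le_iff_le.mp (by rw [this, h2]; exact h12)
  -- key inequality : n + g n ≤ g (2n)
  have hkey : ∀ n : ℕ, (n : ℝ) + g n ≤ g (2 * n) := by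
    intro n
    have hn : (0:ℝ) ≤ n := Nat.cast_nonneg n
    have hgn : (n:ℝ) ≤ g n := hgx n hn
    have hc : (0:ℝ) ≤ g n - n := by linarith
    refine hWsm.le_iff_le.mp ?_
    have e1 : Wfun v ((n:ℝ) + g n) = Wfun v (g n) + ∫ u in (g n)..(g n + n), (v u)⁻¹ := by
      rw [hWadd (g n) ((n:ℝ) + g n), add_comm (n:ℝ) (g n)]
    have e2 : (∫ u in (g n)..(g n + n), (v u)⁻¹) ≤ ∫ u in (n:ℝ)..(2*n), (v u)⁻¹ := by
      have := htrans (n:ℝ) (2*n) (g n - n) (by linarith) hc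
      have ha : (n:ℝ) + (g n - n) = g n := by ring
      have hb : (2*(n:ℝ)) + (g n - n) = g n + n := by ring
      rwa [ha, hb] at this
    have e3 : Wfun v (2*(n:ℝ)) = Wfun v (n:ℝ) + ∫ u in (n:ℝ)..(2*n), (v u)⁻¹ :=
      hWadd _ _
    rw [e1, hWg n hn, hWg (2*n) (by linarith)]
    rw [e3]
    linarith
  -- pointwise bound on each piece
  have hbound : ∀ n : ℕ, ∀ x : ℝ, x ∈ Ioc (2*(n:ℝ)) (2*(n:ℝ)+2) →
      (v (g x))⁻¹ ≤ (v ((n:ℝ) + g n))⁻¹ := by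
    intro n x hx
    have hn : (0:ℝ) ≤ n := Nat.cast_nonneg n
    have hx0 : (0:ℝ) ≤ x := le_of_lt (lt_of_le_of_lt (by positivity) hx.1)
    have h1 : g (2*(n:ℝ)) ≤ g x := by
      refine hWinvmono _ _ (add_nonneg (hWnn _ (by positivity)) hβpos.le) ?_
      have := hWsm.monotone hx.1.le
      linarith
    have h2 : (n:ℝ) + g n ≤ g x := le_trans (hkey n) h1
    exact inv_anti₀ (hvpos _) (hvmono h2)
  -- now bound Ia
  have hIa : Ia v Winv β < ⊤ := by
    have hcover : Ioi (0:ℝ) ⊆ ⋃ n : ℕ, Ioc (2*(n:ℝ)) (2*(n:ℝ)+2) := by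
      intro x hx
      have hx' : (0:ℝ) < x := hx
      simp only [mem_iUnion, mem_Ioc]
      have hm : 1 ≤ ⌈x/2⌉₊ := by
        rw [Nat.one_le_ceil_iff]; positivity
      refine ⟨⌈x/2⌉₊ - 1, ?_, ?_⟩
      · have : (⌈x/2⌉₊ - 1 : ℕ) < ⌈x/2⌉₊ := by omega
        have := Nat.lt_ceil.mp this
        linarith
      · have h1 : x/2 ≤ (⌈x/2⌉₊ : ℝ) := Nat.le_ceil _
        have h2 : ((⌈x/2⌉₊ - 1 : ℕ) : ℝ) = (⌈x/2⌉₊ : ℝ) - 1 := by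
          push_cast [hm]; ring
        rw [h2]; linarith
    have hstep : Ia v Winv β ≤ ∑' n : ℕ,
        ENNReal.ofReal ((v ((n:ℝ) + g n))⁻¹) * 2 := by
      calc Ia v Winv β
          ≤ ∫⁻ x in ⋃ n : ℕ, Ioc (2*(n:ℝ)) (2*(n:ℝ)+2),
              ENNReal.ofReal (v (g x))⁻¹ := lintegral_mono_set hcover
        _ ≤ ∑' n : ℕ, ∫⁻ x in Ioc (2*(n:ℝ)) (2*(n:ℝ)+2),
              ENNReal.ofReal (v (g x))⁻¹ := lintegral_iUnion_le _ _
        _ ≤ ∑' n : ℕ, ENNReal.ofReal ((v ((n:ℝ) + g n))⁻¹) * 2 := by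
            refine ENNReal.tsum_le_tsum (fun n => ?_)
            calc (∫⁻ x in Ioc (2*(n:ℝ)) (2*(n:ℝ)+2), ENNReal.ofReal (v (g x))⁻¹)
                ≤ ∫⁻ _ in Ioc (2*(n:ℝ)) (2*(n:ℝ)+2),
                    ENNReal.ofReal ((v ((n:ℝ) + g n))⁻¹) :=
                  setLIntegral_mono measurable_const
                    (fun x hx => ENNReal.ofReal_le_ofReal (hbound n x hx))
              _ = ENNReal.ofReal ((v ((n:ℝ) + g n))⁻¹) *
                    volume (Ioc (2*(n:ℝ)) (2*(n:ℝ)+2)) := setLIntegral_const _ _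
              _ = ENNReal.ofReal ((v ((n:ℝ) + g n))⁻¹) * 2 := by
                  rw [Real.volume_Ioc]
                  norm_num
    have hfin : (∑' n : ℕ, ENNReal.ofReal ((v ((n:ℝ) + g n))⁻¹) * 2) < ⊤ := by
      rw [ENNReal.tsum_mul_right, ← ENNReal.ofReal_tsum_of_nonneg
        (fun n => inv_nonneg.2 (hvpos _).le) hsum]
      exact ENNReal.mul_lt_top ENNReal.ofReal_lt_top (by norm_num)
    exact lt_of_le_of_lt hstep hfin
  have hmem : ENNReal.ofReal β ∈ ENNReal.ofReal '' {α : ℝ | 0 < α ∧ Ia v Winv α < ⊤} :=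
    ⟨β, ⟨hβpos, hIa⟩, rfl⟩
  exact absurd hβ (not_lt.mpr (sInf_le hmem))
end
end

section
/- Let (Rₙ, Bₙ) be a w-urn process (Rₙ + Bₙ = n, and at each step a red ball is added with conditional probability w(Rₙ)/(w(Rₙ)+w(Bₙ)), otherwise a blue ball). Then M̂ₙ := W(Rₙ) − W(Bₙ) is a martingale with respect to the natural filtration, and E[M̂ₙ²] ≤ 2 ∑_{k=0}^∞ 1/w(k)²; in particular, if ∑ₖ 1/w(k)² < ∞ then M̂ₙ converges a.s. and in L². -/
open MeasureTheory Filter Topology Set ProbabilityTheory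
open scoped ENNReal NNReal

noncomputable section

/-- Discrete primitive of `1/w`: `Wd w m = W(m) = ∑_{k<m} 1/w(k)`. -/
def Wd (w : ℕ → ℝ) (m : ℕ) : ℝ := ∑ k ∈ Finset.range m, (w k)⁻¹

/-- Discrete primitive of `1/w²`. -/
def Vd (w : ℕ → ℝ) (m : ℕ) : ℝ := ∑ k ∈ Finset.range m, ((w k) ^ 2)⁻¹

lemma Wd_succ (w : ℕ → ℝ) (m : ℕ) : Wd w (m + 1) = Wd w m + (w m)⁻¹ :=
  Finset.sum_range_succ _ _

lemma Vd_succ (w : ℕ → ℝ) (m : ℕ) : Vd w (m + 1) = Vd w m + ((w m) ^ 2)⁻¹ :=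
  Finset.sum_range_succ _ _

lemma Wd_nonneg {w : ℕ → ℝ} (hpos : ∀ k, 0 < w k) (m : ℕ) : 0 ≤ Wd w m :=
  Finset.sum_nonneg fun k _ => le_of_lt (inv_pos.2 (hpos k))

lemma Wd_mono {w : ℕ → ℝ} (hpos : ∀ k, 0 < w k) {m n : ℕ} (h : m ≤ n) :
    Wd w m ≤ Wd w n :=
  Finset.sum_le_sum_of_subset_of_nonneg (Finset.range_subset_range.2 h)
    fun k _ _ => le_of_lt (inv_pos.2 (hpos k))

lemma Vd_nonneg {w : ℕ → ℝ} (hpos : ∀ k, 0 < w k) (m : ℕ) : 0 ≤ Vd w m :=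
  Finset.sum_nonneg fun k _ => le_of_lt (inv_pos.2 (pow_pos (hpos k) 2))

lemma Vd_mono {w : ℕ → ℝ} (hpos : ∀ k, 0 < w k) {m n : ℕ} (h : m ≤ n) :
    Vd w m ≤ Vd w n :=
  Finset.sum_le_sum_of_subset_of_nonneg (Finset.range_subset_range.2 h)
    fun k _ _ => le_of_lt (inv_pos.2 (pow_pos (hpos k) 2))

lemma inv_le_Wd {w : ℕ → ℝ} (hpos : ∀ k, 0 < w k) {m n : ℕ} (h : m < n) :
    (w m)⁻¹ ≤ Wd w n :=
  Finset.single_le_sum (fun k _ => le_of_lt (inv_pos.2 (hpos k)))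
    (Finset.mem_range.2 h)

lemma abs_le_half_sq_add_one (x : ℝ) : |x| ≤ (x ^ 2 + 1) / 2 := by
  nlinarith [sq_nonneg (|x| - 1), sq_abs x]

/-- for a `w`-urn process `(Rₙ,Bₙ)` (`Rₙ+Bₙ = n`, a red ball is added with
conditional probability `w(Rₙ)/(w(Rₙ)+w(Bₙ))`), the process `M̂ₙ = W(Rₙ) − W(Bₙ)` is a
martingale, `E[M̂ₙ²] ≤ 2 ∑ₖ 1/w(k)²`, and if `∑ₖ 1/w(k)² < ∞` then `M̂ₙ` converges a.s.
and in `L²`. -/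
theorem stmt19 {Ω : Type*} {m0 : MeasurableSpace Ω} (μ : Measure Ω)
    [IsProbabilityMeasure μ]
    (w : ℕ → ℝ) (hpos : ∀ k, 0 < w k)
    (ℱ : Filtration ℕ m0)
    (R B : ℕ → Ω → ℕ)
    (hadapR : ∀ n, @Measurable Ω ℕ (ℱ n) _ (R n))
    (hadapB : ∀ n, @Measurable Ω ℕ (ℱ n) _ (B n))
    (hsum : ∀ n ω, R n ω + B n ω = n)
    (hstep : ∀ n ω, R (n + 1) ω = R n ω ∨ R (n + 1) ω = R n ω + 1)
    (hcond : ∀ n,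
      (μ[(fun ω => if R (n + 1) ω = R n ω + 1 then (1 : ℝ) else 0) | ℱ n])
        =ᵐ[μ] fun ω => w (R n ω) / (w (R n ω) + w (B n ω))) :
    Martingale (fun n ω => Wd w (R n ω) - Wd w (B n ω)) ℱ μ ∧
    (∀ n, ∫⁻ ω, ENNReal.ofReal ((Wd w (R n ω) - Wd w (B n ω)) ^ 2) ∂μ
        ≤ 2 * ∑' k : ℕ, ENNReal.ofReal (((w k) ^ 2)⁻¹)) ∧
    (Summable (fun k : ℕ => ((w k) ^ 2)⁻¹) →
      ∃ Minf : Ω → ℝ,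
        (∀ᵐ ω ∂μ, Tendsto (fun n => Wd w (R n ω) - Wd w (B n ω)) atTop (nhds (Minf ω))) ∧
        Tendsto (fun n => ∫ ω, (Wd w (R n ω) - Wd w (B n ω) - Minf ω) ^ 2 ∂μ)
          atTop (nhds 0)) := by
  classical
  set M : ℕ → Ω → ℝ := fun n ω => Wd w (R n ω) - Wd w (B n ω) with hMdef
  set I : ℕ → Ω → ℝ := fun n ω => if R (n + 1) ω = R n ω + 1 then (1 : ℝ) else 0
    with hIdef
  -- step dichotomy for both coordinates
  have hRB : ∀ n ω, (R (n+1) ω = R n ω + 1 ∧ B (n+1) ω = B n ω) ∨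
      (R (n+1) ω = R n ω ∧ B (n+1) ω = B n ω + 1) := by
    intro n ω
    rcases hstep n ω with h | h
    · right; constructor; · exact h
      have h1 := hsum n ω; have h2 := hsum (n+1) ω; omega
    · left; constructor; · exact h
      have h1 := hsum n ω; have h2 := hsum (n+1) ω; omega
  have hRle : ∀ n ω, R n ω ≤ n := fun n ω => Nat.le.intro (hsum n ω)
  have hBle : ∀ n ω, B n ω ≤ n := fun n ω => Nat.le.intro (by rw [add_comm]; exact hsum n ω)
  -- measurability helpers
  have hcompF : ∀ (n : ℕ) (f : ℕ → ℝ) (X : Ω → ℕ), @Measurable Ω ℕ (ℱ n) _ X →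
      @Measurable Ω ℝ (ℱ n) _ (fun ω => f (X ω)) :=
    fun n f X hX => measurable_from_top.comp hX
  have hcompF0 : ∀ (f : ℕ → ℝ) (X : Ω → ℕ), Measurable X →
      Measurable (fun ω => f (X ω)) :=
    fun f X hX => measurable_from_top.comp hX
  have hMm : ∀ n, @Measurable Ω ℝ (ℱ n) _ (M n) := fun n =>
    (hcompF n (Wd w) _ (hadapR n)).sub (hcompF n (Wd w) _ (hadapB n))
  have hMsm : ∀ n, StronglyMeasurable[ℱ n] (M n) := fun n => (hMm n).stronglyMeasurable
  have hMm0 : ∀ n, Measurable (M n) := fun n => (hMm n).mono (ℱ.le n) le_rfl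
  -- bounded measurable functions are integrable
  have hbi : ∀ (f : Ω → ℝ) (c : ℝ), Measurable f → (∀ ω, |f ω| ≤ c) → Integrable f μ := by
    intro f c hf hfc
    exact Integrable.mono' (integrable_const c) hf.aestronglyMeasurable
      (Eventually.of_forall fun ω => by rw [Real.norm_eq_abs]; exact hfc ω)
  have hMb : ∀ n ω, |M n ω| ≤ Wd w n := by
    intro n ω
    have h1 : 0 ≤ Wd w (R n ω) := Wd_nonneg hpos _
    have h2 : 0 ≤ Wd w (B n ω) := Wd_nonneg hpos _
    have h3 : Wd w (R n ω) ≤ Wd w n := Wd_mono hpos (hRle n ω)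
    have h4 : Wd w (B n ω) ≤ Wd w n := Wd_mono hpos (hBle n ω)
    rw [abs_le]; constructor <;> simp only [hMdef] <;> linarith
  have hint : ∀ n, Integrable (M n) μ := fun n => hbi _ _ (hMm0 n) (hMb n)
  -- pathwise increment decomposition
  have hIval1 : ∀ n ω, R (n+1) ω = R n ω + 1 → I n ω = 1 := by
    intro n ω h; exact if_pos h
  have hIval0 : ∀ n ω, R (n+1) ω = R n ω → I n ω = 0 := by
    intro n ω h; exact if_neg (by omega)
  have hD : ∀ n ω, M (n+1) ω - M n ω
      = I n ω * ((w (R n ω))⁻¹ + (w (B n ω))⁻¹) - (w (B n ω))⁻¹ := by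
    intro n ω
    rcases hRB n ω with ⟨h1, h2⟩ | ⟨h1, h2⟩
    · rw [hIval1 n ω h1]
      simp only [hMdef, h1, h2, Wd_succ]; ring
    · rw [hIval0 n ω h1]
      simp only [hMdef, h1, h2, Wd_succ]; ring
  have hIb : ∀ n ω, |I n ω| ≤ 1 := by
    intro n ω; simp only [hIdef]; split <;> simp
  have hgb : ∀ n ω, |(w (R n ω))⁻¹ + (w (B n ω))⁻¹| ≤ 2 * Wd w (n+1) := by
    intro n ω
    have h1 : (w (R n ω))⁻¹ ≤ Wd w (n+1) := inv_le_Wd hpos (Nat.lt_succ_of_le (hRle n ω))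
    have h2 : (w (B n ω))⁻¹ ≤ Wd w (n+1) := inv_le_Wd hpos (Nat.lt_succ_of_le (hBle n ω))
    have h3 : 0 < (w (R n ω))⁻¹ := inv_pos.2 (hpos _)
    have h4 : 0 < (w (B n ω))⁻¹ := inv_pos.2 (hpos _)
    rw [abs_le]; constructor <;> linarith
  have hIm : ∀ n, Measurable (I n) := by
    intro n
    have hpm : Measurable fun ω => (R (n+1) ω, R n ω) :=
      ((hadapR (n+1)).mono (ℱ.le (n+1)) le_rfl).prodMk
        ((hadapR n).mono (ℱ.le n) le_rfl)
    have hs : MeasurableSet {p : ℕ × ℕ | p.1 = p.2 + 1} :=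
      (Set.to_countable _).measurableSet
    simp only [hIdef]
    exact Measurable.ite (hpm hs) measurable_const measurable_const
  have hIint : ∀ n, Integrable (I n) μ := fun n => hbi _ _ (hIm n) (hIb n)
  have hhb : ∀ n ω, |(w (B n ω))⁻¹| ≤ Wd w (n+1) := by
    intro n ω
    have h2 : (w (B n ω))⁻¹ ≤ Wd w (n+1) := inv_le_Wd hpos (Nat.lt_succ_of_le (hBle n ω))
    have h4 : 0 < (w (B n ω))⁻¹ := inv_pos.2 (hpos _)
    rw [abs_le]; constructor <;> linarith
  have hDb : ∀ n ω, |M (n+1) ω - M n ω| ≤ 3 * Wd w (n+1) := by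
    intro n ω
    rw [hD n ω]
    have h1 := hgb n ω; have h2 := hhb n ω; have h3 := hIb n ω
    calc |I n ω * ((w (R n ω))⁻¹ + (w (B n ω))⁻¹) - (w (B n ω))⁻¹|
        ≤ |I n ω * ((w (R n ω))⁻¹ + (w (B n ω))⁻¹)| + |(w (B n ω))⁻¹| := abs_sub _ _
      _ ≤ 1 * (2 * Wd w (n+1)) + Wd w (n+1) := by
          rw [abs_mul]
          exact add_le_add (mul_le_mul h3 h1 (abs_nonneg _) one_pos.le) h2
      _ = 3 * Wd w (n+1) := by ring
  have hcondD : ∀ n, (μ[(fun ω => M (n+1) ω - M n ω) | ℱ n]) =ᵐ[μ] 0 := by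
    intro n
    set g : Ω → ℝ := fun ω => (w (R n ω))⁻¹ + (w (B n ω))⁻¹ with hgdef
    set h : Ω → ℝ := fun ω => (w (B n ω))⁻¹ with hhdef
    have hgmF : @Measurable Ω ℝ (ℱ n) _ g :=
      (hcompF n (fun k => (w k)⁻¹) _ (hadapR n)).add
        (hcompF n (fun k => (w k)⁻¹) _ (hadapB n))
    have hgm0 : Measurable g := hgmF.mono (ℱ.le n) le_rfl
    have hhmF : @Measurable Ω ℝ (ℱ n) _ h := hcompF n (fun k => (w k)⁻¹) _ (hadapB n)
    have hhm0 : Measurable h := hhmF.mono (ℱ.le n) le_rfl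
    have hh_int : Integrable h μ := hbi _ _ hhm0 (hhb n)
    have hgI_int : Integrable (g * I n) μ := by
      refine hbi _ (2 * Wd w (n+1)) (hgm0.mul (hIm n)) fun ω => ?_
      have hW0 : 0 ≤ Wd w (n+1) := Wd_nonneg hpos _
      calc |(g * I n) ω| = |g ω| * |I n ω| := abs_mul _ _
        _ ≤ (2 * Wd w (n+1)) * 1 :=
            mul_le_mul (hgb n ω) (hIb n ω) (abs_nonneg _) (by linarith)
        _ = 2 * Wd w (n+1) := mul_one _
    have e1 : (fun ω => M (n+1) ω - M n ω) = g * I n - h := by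
      funext ω
      simp only [Pi.sub_apply, Pi.mul_apply, hgdef, hhdef]
      rw [hD n ω]; ring
    rw [e1]
    refine (condExp_sub hgI_int hh_int (ℱ n)).trans ?_
    have hmul := condExp_mul_of_stronglyMeasurable_left (μ := μ) (m := ℱ n)
      hgmF.stronglyMeasurable hgI_int (hIint n)
    have hh := condExp_of_stronglyMeasurable (ℱ.le n) hhmF.stronglyMeasurable hh_int
    rw [hh]
    filter_upwards [hmul, hcond n] with ω h1 h2
    simp only [Pi.sub_apply, Pi.mul_apply, Pi.zero_apply]
    rw [h1]
    simp only [Pi.mul_apply]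
    have h2' : (μ[I n | ℱ n]) ω = w (R n ω) / (w (R n ω) + w (B n ω)) := h2
    rw [h2']
    simp only [hgdef, hhdef]
    have hr := hpos (R n ω); have hb := hpos (B n ω)
    have hrb : w (R n ω) + w (B n ω) ≠ 0 := by positivity
    field_simp
    ring
  -- martingale property
  have hadp : StronglyAdapted ℱ M := fun n => hMsm n
  have hDint : ∀ n, Integrable (fun ω => M (n+1) ω - M n ω) μ :=
    fun n => hbi _ _ ((hMm0 (n+1)).sub (hMm0 n)) (hDb n)
  have hmart : Martingale M ℱ μ := by
    refine martingale_nat hadp hint fun n => ?_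
    have e1 : M (n+1) = M n + (fun ω => M (n+1) ω - M n ω) := by
      funext ω; simp only [Pi.add_apply]; ring
    have h2 : μ[M (n+1) | ℱ n] =ᵐ[μ]
        μ[M n | ℱ n] + μ[(fun ω => M (n+1) ω - M n ω) | ℱ n] := by
      nth_rewrite 1 [e1]
      exact condExp_add (hint n) (hDint n) (ℱ n)
    have h3 := condExp_of_stronglyMeasurable (ℱ.le n) (hMsm n) (hint n)
    filter_upwards [h2, hcondD n] with ω ha hb
    simp only [Pi.add_apply, h3, Pi.zero_apply] at ha hb ⊢
    rw [ha, hb, add_zero]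
  -- second moment computation
  set s : ℕ → ℝ := fun n => ∫ ω, (Vd w (R n ω) + Vd w (B n ω)) ∂μ with hsdef
  have hVb : ∀ n ω, |Vd w (R n ω) + Vd w (B n ω)| ≤ 2 * Vd w n := by
    intro n ω
    have h1 : 0 ≤ Vd w (R n ω) := Vd_nonneg hpos _
    have h2 : 0 ≤ Vd w (B n ω) := Vd_nonneg hpos _
    have h3 : Vd w (R n ω) ≤ Vd w n := Vd_mono hpos (hRle n ω)
    have h4 : Vd w (B n ω) ≤ Vd w n := Vd_mono hpos (hBle n ω)
    rw [abs_le]; constructor <;> linarith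
  have hVm : ∀ n, Measurable (fun ω => Vd w (R n ω) + Vd w (B n ω)) := fun n =>
    (hcompF0 (Vd w) _ ((hadapR n).mono (ℱ.le n) le_rfl)).add
      (hcompF0 (Vd w) _ ((hadapB n).mono (ℱ.le n) le_rfl))
  have hVint : ∀ n, Integrable (fun ω => Vd w (R n ω) + Vd w (B n ω)) μ :=
    fun n => hbi _ _ (hVm n) (hVb n)
  have hMsq_int : ∀ n, Integrable (fun ω => (M n ω) ^ 2) μ := by
    intro n
    refine hbi _ ((Wd w n) ^ 2) ((hMm0 n).pow_const 2) fun ω => ?_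
    rw [abs_pow]
    exact pow_le_pow_left₀ (abs_nonneg _) (hMb n ω) 2
  have hintMD : ∀ n, Integrable (fun ω => M n ω * (M (n+1) ω - M n ω)) μ := by
    intro n
    refine hbi _ (Wd w n * (3 * Wd w (n+1))) ((hMm0 n).mul ((hMm0 (n+1)).sub (hMm0 n)))
      fun ω => ?_
    rw [abs_mul]
    exact mul_le_mul (hMb n ω) (hDb n ω) (abs_nonneg _) ((abs_nonneg _).trans (hMb n ω))
  have hcross0 : ∀ n, ∫ ω, M n ω * (M (n+1) ω - M n ω) ∂μ = 0 := by
    intro n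
    have e0 : (fun ω => M n ω * (M (n+1) ω - M n ω))
        = M n * (fun ω => M (n+1) ω - M n ω) := rfl
    have h1 : (μ[M n * (fun ω => M (n+1) ω - M n ω) | ℱ n]) =ᵐ[μ] 0 := by
      have hmul := condExp_mul_of_stronglyMeasurable_left (μ := μ) (m := ℱ n) (hMsm n)
        (e0 ▸ hintMD n) (hDint n)
      filter_upwards [hmul, hcondD n] with ω ha hb
      simp only [Pi.mul_apply, Pi.zero_apply] at ha hb ⊢
      rw [ha, hb, mul_zero]
    calc ∫ ω, M n ω * (M (n+1) ω - M n ω) ∂μ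
        = ∫ ω, (μ[M n * (fun ω => M (n+1) ω - M n ω) | ℱ n]) ω ∂μ := by
          rw [integral_condExp (ℱ.le n)]; rw [e0]
      _ = ∫ ω, (0 : ℝ) ∂μ := integral_congr_ae h1
      _ = 0 := integral_zero _ _
  have hT : ∀ n, ∫ ω, ((M n ω) ^ 2 - (Vd w (R n ω) + Vd w (B n ω))) ∂μ = 0 := by
    intro n
    induction n with
    | zero =>
      have h0 : ∀ ω, (M 0 ω) ^ 2 - (Vd w (R 0 ω) + Vd w (B 0 ω)) = 0 := by
        intro ω
        have hR0 : R 0 ω = 0 := by have := hsum 0 ω; omega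
        have hB0 : B 0 ω = 0 := by have := hsum 0 ω; omega
        simp [hMdef, hR0, hB0, Wd, Vd]
      simp only [h0, integral_zero]
    | succ n ih =>
      have hpath : ∀ ω, (M (n+1) ω) ^ 2 - (Vd w (R (n+1) ω) + Vd w (B (n+1) ω))
          = ((M n ω) ^ 2 - (Vd w (R n ω) + Vd w (B n ω)))
            + 2 * (M n ω * (M (n+1) ω - M n ω)) := by
        intro ω
        rcases hRB n ω with ⟨h1, h2⟩ | ⟨h1, h2⟩
        · have hMstep : M (n+1) ω = M n ω + (w (R n ω))⁻¹ := by
            simp only [hMdef, h1, h2, Wd_succ]; ring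
          rw [h1, h2, Vd_succ, hMstep]
          have hiv : ((w (R n ω))⁻¹) ^ 2 = ((w (R n ω)) ^ 2)⁻¹ := by rw [← inv_pow]
          nlinarith [hiv]
        · have hMstep : M (n+1) ω = M n ω - (w (B n ω))⁻¹ := by
            simp only [hMdef, h1, h2, Wd_succ]; ring
          rw [h1, h2, Vd_succ, hMstep]
          have hiv : ((w (B n ω))⁻¹) ^ 2 = ((w (B n ω)) ^ 2)⁻¹ := by rw [← inv_pow]
          nlinarith [hiv]
      have hi1 : Integrable
          (fun ω => (M n ω) ^ 2 - (Vd w (R n ω) + Vd w (B n ω))) μ :=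
        (hMsq_int n).sub (hVint n)
      have hi2 : Integrable (fun ω => 2 * (M n ω * (M (n+1) ω - M n ω))) μ :=
        (hintMD n).const_mul 2
      calc ∫ ω, ((M (n+1) ω) ^ 2 - (Vd w (R (n+1) ω) + Vd w (B (n+1) ω))) ∂μ
          = ∫ ω, (((M n ω) ^ 2 - (Vd w (R n ω) + Vd w (B n ω)))
              + 2 * (M n ω * (M (n+1) ω - M n ω))) ∂μ :=
            integral_congr_ae (Eventually.of_forall hpath)
        _ = ∫ ω, ((M n ω) ^ 2 - (Vd w (R n ω) + Vd w (B n ω))) ∂μ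
              + ∫ ω, 2 * (M n ω * (M (n+1) ω - M n ω)) ∂μ := integral_add hi1 hi2
        _ = 0 := by rw [ih, integral_const_mul, hcross0 n]; ring
  have hMsq : ∀ n, ∫ ω, (M n ω) ^ 2 ∂μ = s n := by
    intro n
    have h := hT n
    rw [integral_sub (hMsq_int n) (hVint n)] at h
    have : s n = ∫ ω, (Vd w (R n ω) + Vd w (B n ω)) ∂μ := rfl
    linarith [h]
  -- part 2: the lintegral bound
  have hpart2 : ∀ n, ∫⁻ ω, ENNReal.ofReal ((M n ω) ^ 2) ∂μ
      ≤ 2 * ∑' k : ℕ, ENNReal.ofReal (((w k) ^ 2)⁻¹) := by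
    intro n
    have h1 : ∫⁻ ω, ENNReal.ofReal ((M n ω) ^ 2) ∂μ = ENNReal.ofReal (s n) := by
      rw [← hMsq n]
      exact (ofReal_integral_eq_lintegral_ofReal (hMsq_int n)
        (Eventually.of_forall fun ω => sq_nonneg _)).symm
    rw [h1]
    have h2 : s n ≤ 2 * Vd w n := by
      have h3 : s n ≤ ∫ _ω, 2 * Vd w n ∂μ := by
        refine integral_mono (hVint n) (integrable_const _) fun ω => ?_
        exact (abs_le.1 (hVb n ω)).2
      simpa using h3
    calc ENNReal.ofReal (s n) ≤ ENNReal.ofReal (2 * Vd w n) := ENNReal.ofReal_le_ofReal h2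
      _ = 2 * ENNReal.ofReal (Vd w n) := by
          rw [ENNReal.ofReal_mul (by norm_num)]; norm_num
      _ = 2 * ∑ k ∈ Finset.range n, ENNReal.ofReal (((w k) ^ 2)⁻¹) := by
          rw [Vd, ENNReal.ofReal_sum_of_nonneg]
          intro k _
          positivity
      _ ≤ 2 * ∑' k : ℕ, ENNReal.ofReal (((w k) ^ 2)⁻¹) := by
          gcongr
          exact ENNReal.sum_le_tsum _
  refine ⟨hmart, hpart2, ?_⟩
  -- part 3: convergence
  intro hsummable
  set Sr : ℝ := ∑' k : ℕ, ((w k) ^ 2)⁻¹ with hSrdef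
  have hSr0 : 0 ≤ Sr := tsum_nonneg fun k => by positivity
  have hVd_le : ∀ m, Vd w m ≤ Sr := fun m =>
    hsummable.sum_le_tsum (Finset.range m) (fun k _ => by positivity)
  have hs_le : ∀ n, s n ≤ 2 * Sr := by
    intro n
    have h3 : s n ≤ ∫ _ω, 2 * Sr ∂μ := by
      refine integral_mono (hVint n) (integrable_const _) fun ω => ?_
      have h1 : Vd w (R n ω) ≤ Sr := hVd_le _
      have h2 : Vd w (B n ω) ≤ Sr := hVd_le _
      simp only
      linarith
    simpa using h3
  have hs0 : ∀ n, 0 ≤ s n := by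
    intro n
    refine integral_nonneg fun ω => ?_
    have h1 : 0 ≤ Vd w (R n ω) := Vd_nonneg hpos _
    have h2 : 0 ≤ Vd w (B n ω) := Vd_nonneg hpos _
    simp only [Pi.zero_apply]
    linarith
  -- L¹ bound
  have hL1 : ∀ n, eLpNorm (M n) 1 μ ≤ ((Real.toNNReal (2 * Sr + 1)) : ℝ≥0) := by
    intro n
    have habs : ∫ ω, |M n ω| ∂μ ≤ 2 * Sr + 1 := by
      have hpt : ∀ ω, |M n ω| ≤ ((M n ω) ^ 2 + 1) / 2 := fun ω =>
        abs_le_half_sq_add_one (M n ω)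
      calc ∫ ω, |M n ω| ∂μ ≤ ∫ ω, ((M n ω) ^ 2 + 1) / 2 ∂μ :=
            integral_mono (hint n).abs (((hMsq_int n).add (integrable_const 1)).div_const 2)
              hpt
        _ = (∫ ω, ((M n ω) ^ 2 + 1) ∂μ) / 2 := integral_div 2 _
        _ = (∫ ω, (M n ω) ^ 2 ∂μ + 1) / 2 := by
            rw [integral_add (hMsq_int n) (integrable_const 1)]
            simp
        _ ≤ 2 * Sr + 1 := by
            rw [hMsq n]
            have ha := hs_le n; have hb := hs0 n; linarith
    have h1 : eLpNorm (M n) 1 μ = ∫⁻ ω, ENNReal.ofReal |M n ω| ∂μ := by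
      rw [eLpNorm_one_eq_lintegral_enorm]
      congr 1; funext ω
      rw [← ofReal_norm, Real.norm_eq_abs]
    rw [h1]
    have h2 : ∫⁻ ω, ENNReal.ofReal |M n ω| ∂μ = ENNReal.ofReal (∫ ω, |M n ω| ∂μ) :=
      (ofReal_integral_eq_lintegral_ofReal (hint n).abs
        (Eventually.of_forall fun ω => abs_nonneg _)).symm
    rw [h2]
    exact ENNReal.ofReal_le_ofReal habs
  set Minf : Ω → ℝ := ℱ.limitProcess M μ with hMinfdef
  have hae : ∀ᵐ ω ∂μ, Tendsto (fun n => M n ω) atTop (𝓝 (Minf ω)) :=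
    hmart.submartingale.ae_tendsto_limitProcess hL1
  have hMinf_sm : StronglyMeasurable Minf := Filtration.stronglyMeasurable_limit_process'
  have hMinf_m : Measurable Minf := hMinf_sm.measurable
  refine ⟨Minf, hae, ?_⟩
  -- orthogonality of increments
  have hintMM : ∀ m n : ℕ, Integrable (fun ω => M m ω * M n ω) μ := by
    intro m n
    refine hbi _ (Wd w m * Wd w n) ((hMm0 m).mul (hMm0 n)) fun ω => ?_
    rw [abs_mul]
    exact mul_le_mul (hMb m ω) (hMb n ω) (abs_nonneg _) ((abs_nonneg _).trans (hMb m ω))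
  have hcross : ∀ m n : ℕ, m ≤ n → ∫ ω, M m ω * M n ω ∂μ = ∫ ω, (M m ω) ^ 2 ∂μ := by
    intro m n hmn
    have e0 : (fun ω => M m ω * M n ω) = M m * M n := rfl
    have hmul := condExp_mul_of_stronglyMeasurable_left (μ := μ) (m := ℱ m) (hMsm m)
      (e0 ▸ hintMM m n) (hint n)
    have hme := hmart.condExp_ae_eq hmn
    have h1 : (μ[M m * M n | ℱ m]) =ᵐ[μ] fun ω => (M m ω) ^ 2 := by
      filter_upwards [hmul, hme] with ω ha hb
      simp only [Pi.mul_apply] at ha ⊢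
      rw [ha, hb, sq]
    calc ∫ ω, M m ω * M n ω ∂μ
        = ∫ ω, (μ[M m * M n | ℱ m]) ω ∂μ := by rw [integral_condExp (ℱ.le m)]; rw [e0]
      _ = ∫ ω, (M m ω) ^ 2 ∂μ := integral_congr_ae h1
  have hdiff : ∀ m n : ℕ, m ≤ n → ∫ ω, (M n ω - M m ω) ^ 2 ∂μ = s n - s m := by
    intro m n hmn
    have e1 : (fun ω => (M n ω - M m ω) ^ 2)
        = fun ω => ((M n ω) ^ 2 + (M m ω) ^ 2) - 2 * (M m ω * M n ω) := by
      funext ω; ring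
    have hi1 : Integrable (fun ω => (M n ω) ^ 2 + (M m ω) ^ 2) μ :=
      (hMsq_int n).add (hMsq_int m)
    have hi2 : Integrable (fun ω => 2 * (M m ω * M n ω)) μ := (hintMM m n).const_mul 2
    rw [e1, integral_sub hi1 hi2, integral_add (hMsq_int n) (hMsq_int m),
      integral_const_mul, hcross m n hmn, hMsq n, hMsq m]
    ring
  -- monotonicity of s
  have hRmono : ∀ ω, Monotone fun n => R n ω := by
    intro ω
    apply monotone_nat_of_le_succ
    intro n
    rcases hstep n ω with h | h <;> omega
  have hBmono : ∀ ω, Monotone fun n => B n ω := by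
    intro ω
    apply monotone_nat_of_le_succ
    intro n
    rcases hRB n ω with ⟨_, h⟩ | ⟨_, h⟩ <;> omega
  have hsmono : Monotone s := by
    intro m n hmn
    refine integral_mono (hVint m) (hVint n) fun ω => ?_
    have h1 : Vd w (R m ω) ≤ Vd w (R n ω) := Vd_mono hpos (hRmono ω hmn)
    have h2 : Vd w (B m ω) ≤ Vd w (B n ω) := Vd_mono hpos (hBmono ω hmn)
    exact add_le_add h1 h2
  set L : ℝ := ⨆ n, s n with hLdef
  have hbddL : BddAbove (Set.range s) := ⟨2 * Sr, by rintro x ⟨n, rfl⟩; exact hs_le n⟩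
  have hsL : ∀ n, s n ≤ L := fun n => le_ciSup hbddL n
  -- the key ε-bound
  have hkey : ∀ ε : ℝ, 0 < ε → ∃ m : ℕ, ∀ n, m ≤ n →
      ∫⁻ ω, ENNReal.ofReal ((M n ω - Minf ω) ^ 2) ∂μ ≤ ENNReal.ofReal (4 * ε) := by
    intro ε hε
    obtain ⟨m, hm⟩ := exists_lt_of_lt_ciSup (show L - ε < L by linarith [hsL 0, hs0 0])
    refine ⟨m, fun n hn => ?_⟩
    have hnm : ∀ p, m ≤ p → ∫⁻ ω, ENNReal.ofReal ((M p ω - M m ω) ^ 2) ∂μ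
        ≤ ENNReal.ofReal ε := by
      intro p hp
      have hint2 : Integrable (fun ω => (M p ω - M m ω) ^ 2) μ := by
        refine hbi _ ((Wd w p + Wd w m) ^ 2) (((hMm0 p).sub (hMm0 m)).pow_const 2)
          fun ω => ?_
        rw [abs_pow]
        refine pow_le_pow_left₀ (abs_nonneg _) ?_ 2
        calc |M p ω - M m ω| ≤ |M p ω| + |M m ω| := abs_sub _ _
          _ ≤ Wd w p + Wd w m := add_le_add (hMb p ω) (hMb m ω)
      rw [← ofReal_integral_eq_lintegral_ofReal hint2
        (Eventually.of_forall fun ω => sq_nonneg _), hdiff m p hp]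
      apply ENNReal.ofReal_le_ofReal
      have := hsL p; linarith
    have hFat : ∫⁻ ω, ENNReal.ofReal ((Minf ω - M m ω) ^ 2) ∂μ ≤ ENNReal.ofReal ε := by
      have hlim : ∀ᵐ ω ∂μ, Tendsto (fun p => ENNReal.ofReal ((M p ω - M m ω) ^ 2)) atTop
          (𝓝 (ENNReal.ofReal ((Minf ω - M m ω) ^ 2))) := by
        filter_upwards [hae] with ω hω
        exact (ENNReal.continuous_ofReal.tendsto _).comp
          ((hω.sub tendsto_const_nhds).pow 2)
      have hcongr : ∫⁻ ω, ENNReal.ofReal ((Minf ω - M m ω) ^ 2) ∂μ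
          = ∫⁻ ω, Filter.liminf (fun p => ENNReal.ofReal ((M p ω - M m ω) ^ 2)) atTop ∂μ := by
        refine lintegral_congr_ae ?_
        filter_upwards [hlim] with ω hω
        exact hω.liminf_eq.symm
      rw [hcongr]
      refine (lintegral_liminf_le fun p =>
        ENNReal.measurable_ofReal.comp (((hMm0 p).sub (hMm0 m)).pow_const 2)).trans ?_
      calc Filter.liminf (fun p => ∫⁻ ω, ENNReal.ofReal ((M p ω - M m ω) ^ 2) ∂μ) atTop
          ≤ Filter.liminf (fun _ => ENNReal.ofReal ε) atTop :=
            Filter.liminf_le_liminf (Filter.eventually_atTop.2 ⟨m, fun p hp => hnm p hp⟩)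
        _ = ENNReal.ofReal ε := Filter.liminf_const _
    have hmeas1 : Measurable fun ω => ENNReal.ofReal ((M n ω - M m ω) ^ 2) :=
      ENNReal.measurable_ofReal.comp (((hMm0 n).sub (hMm0 m)).pow_const 2)
    have hmeas2 : Measurable fun ω => ENNReal.ofReal ((Minf ω - M m ω) ^ 2) :=
      ENNReal.measurable_ofReal.comp ((hMinf_m.sub (hMm0 m)).pow_const 2)
    calc ∫⁻ ω, ENNReal.ofReal ((M n ω - Minf ω) ^ 2) ∂μ
        ≤ ∫⁻ ω, (2 * ENNReal.ofReal ((M n ω - M m ω) ^ 2)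
            + 2 * ENNReal.ofReal ((Minf ω - M m ω) ^ 2)) ∂μ := by
          refine lintegral_mono fun ω => ?_
          have hpt : (M n ω - Minf ω) ^ 2
              ≤ 2 * (M n ω - M m ω) ^ 2 + 2 * (Minf ω - M m ω) ^ 2 := by
            nlinarith [sq_nonneg ((M n ω - M m ω) + (Minf ω - M m ω)),
              sq_nonneg ((M n ω - M m ω) - (Minf ω - M m ω))]
          calc ENNReal.ofReal ((M n ω - Minf ω) ^ 2)
              ≤ ENNReal.ofReal (2 * (M n ω - M m ω) ^ 2 + 2 * (Minf ω - M m ω) ^ 2) :=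
                ENNReal.ofReal_le_ofReal hpt
            _ = 2 * ENNReal.ofReal ((M n ω - M m ω) ^ 2)
                + 2 * ENNReal.ofReal ((Minf ω - M m ω) ^ 2) := by
                rw [ENNReal.ofReal_add (by positivity) (by positivity),
                  ENNReal.ofReal_mul (by norm_num), ENNReal.ofReal_mul (by norm_num)]
                norm_num
      _ = 2 * ∫⁻ ω, ENNReal.ofReal ((M n ω - M m ω) ^ 2) ∂μ
            + 2 * ∫⁻ ω, ENNReal.ofReal ((Minf ω - M m ω) ^ 2) ∂μ := by
          rw [lintegral_add_left (hmeas1.const_mul 2),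
            lintegral_const_mul _ hmeas1, lintegral_const_mul _ hmeas2]
      _ ≤ 2 * ENNReal.ofReal ε + 2 * ENNReal.ofReal ε :=
          add_le_add (mul_le_mul_right (hnm n hn) 2) (mul_le_mul_right hFat 2)
      _ = ENNReal.ofReal (4 * ε) := by
          rw [show (4 : ℝ) * ε = 2 * ε + 2 * ε by ring,
            ENNReal.ofReal_add (by positivity) (by positivity),
            ENNReal.ofReal_mul (p := 2) (by norm_num)]
          norm_num
  -- conclude convergence of lintegrals to 0
  have hen0 : Tendsto (fun n => ∫⁻ ω, ENNReal.ofReal ((M n ω - Minf ω) ^ 2) ∂μ)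
      atTop (𝓝 0) := by
    rw [ENNReal.tendsto_nhds_zero]
    intro ε hε
    rcases eq_or_ne ε ⊤ with rfl | htop
    · obtain ⟨m, hm⟩ := hkey 1 one_pos
      exact Filter.eventually_atTop.2 ⟨m, fun n hn => (hm n hn).trans le_top⟩
    · have hεr : 0 < ε.toReal / 4 := by
        have : 0 < ε.toReal := ENNReal.toReal_pos hε.ne' htop
        linarith
      obtain ⟨m, hm⟩ := hkey (ε.toReal / 4) hεr
      refine Filter.eventually_atTop.2 ⟨m, fun n hn => (hm n hn).trans ?_⟩
      rw [show 4 * (ε.toReal / 4) = ε.toReal by ring, ENNReal.ofReal_toReal htop]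
  have heq : ∀ n, ∫ ω, (M n ω - Minf ω) ^ 2 ∂μ
      = (∫⁻ ω, ENNReal.ofReal ((M n ω - Minf ω) ^ 2) ∂μ).toReal := fun n =>
    integral_eq_lintegral_of_nonneg_ae (Eventually.of_forall fun ω => sq_nonneg _)
      (((hMm0 n).sub hMinf_m).pow_const 2).aestronglyMeasurable
  have hfin : Tendsto (fun n => ∫ ω, (M n ω - Minf ω) ^ 2 ∂μ) atTop (𝓝 0) := by
    have h1 : Tendsto (fun n =>
        (∫⁻ ω, ENNReal.ofReal ((M n ω - Minf ω) ^ 2) ∂μ).toReal) atTop (𝓝 0) := by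
      have := (ENNReal.tendsto_toReal (show (0 : ℝ≥0∞) ≠ ⊤ by simp)).comp hen0
      exact this
    simpa only [heq] using h1
  exact hfin
end
end
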